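/- For every n with 1 ≤ n ≤ 8, there is no geometric (n_{3|4}) configuration. -/

import Mathlib

/- Model of the real projective plane: a point is a 1-dimensional linear subspace
of ℝ³ and a line is a 2-dimensional linear subspace of ℝ³; a point p is incident
to a line ℓ when p ≤ ℓ. -/

open scoped Classical

/-- The degree of a point `p` with respect to a finite set `L` of lines:
the number of lines of `L` incident to `p`. -/
noncomputable def pointDeg (L : Finset (Submodule ℝ (Fin 3 → ℝ)))
    (p : Submodule ℝ (Fin 3 → ℝ)) : ℕ :=
  (L.filter fun l => p ≤ l).card

/-- The degree of a line `l` with respect to a finite set `P` of points: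
the number of points of `P` incident to `l`. -/
noncomputable def lineDeg (P : Finset (Submodule ℝ (Fin 3 → ℝ)))
    (l : Submodule ℝ (Fin 3 → ℝ)) : ℕ :=
  (P.filter fun p => p ≤ l).card

/-- The number of incidences of `(P, L)`: the number of pairs `(p, ℓ) ∈ P × L`
with `p` incident to `ℓ`. -/
noncomputable def incCount (P L : Finset (Submodule ℝ (Fin 3 → ℝ))) : ℕ :=
  ((P ×ˢ L).filter fun pl => pl.1 ≤ pl.2).card

/-- A point of the real projective plane: a 1-dimensional linear subspace of ℝ³. -/
def IsProjPoint (p : Submodule ℝ (Fin 3 → ℝ)) : Prop := Module.finrank ℝ p = 1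

/-- A line of the real projective plane: a 2-dimensional linear subspace of ℝ³. -/
def IsProjLine (l : Submodule ℝ (Fin 3 → ℝ)) : Prop := Module.finrank ℝ l = 2

section Helpers

open Submodule Module

abbrev V3 := Fin 3 → ℝ

lemma no_eisenstein {a b : ℝ} (hb : b ≠ 0) (h : a ^ 2 + a * b + b ^ 2 = 0) : False := by
  nlinarith [sq_nonneg (2 * a + b), sq_nonneg b, mul_self_pos.mpr hb]


lemma point_rep {p : Submodule ℝ V3} (hp : IsProjPoint p) :
    ∃ u : V3, u ≠ 0 ∧ p = span ℝ {u} := by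
  have hb : p ≠ ⊥ := by
    intro h
    rw [h] at hp
    simp [IsProjPoint] at hp
  obtain ⟨u, hup, hu0⟩ := Submodule.exists_mem_ne_zero_of_ne_bot hb
  refine ⟨u, hu0, ?_⟩
  have h1 : span ℝ {u} ≤ p := (span_singleton_le_iff_mem u p).mpr hup
  have h2 : finrank ℝ p ≤ finrank ℝ (span ℝ ({u} : Set V3)) := by
    rw [hp, finrank_span_singleton hu0]
  exact (Submodule.eq_of_le_of_finrank_le h1 h2).symm

lemma smul_span {u : V3} {a : ℝ} (ha : a ≠ 0) : span ℝ {a • u} = span ℝ {u} :=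
  Submodule.span_singleton_smul_eq (isUnit_iff_ne_zero.mpr ha) u

lemma proj_point_span {u : V3} (hu : u ≠ 0) : IsProjPoint (span ℝ {u}) :=
  finrank_span_singleton hu

lemma sup_of_points {p q l : Submodule ℝ V3} (hp : IsProjPoint p) (hq : IsProjPoint q)
    (hl : IsProjLine l) (hpq : p ≠ q) (h1 : p ≤ l) (h2 : q ≤ l) : l = p ⊔ q := by
  have hle : p ⊔ q ≤ l := sup_le h1 h2
  have hlt : p < p ⊔ q := by
    rcases lt_or_eq_of_le (le_sup_left : p ≤ p ⊔ q) with h | h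
    · exact h
    · exfalso
      apply hpq
      have hqp : q ≤ p := h ▸ le_sup_right
      exact (Submodule.eq_of_le_of_finrank_le hqp (by rw [hp, hq])).symm
  have h3 : 1 < finrank ℝ (p ⊔ q : Submodule ℝ V3) := by
    have h := Submodule.finrank_lt_finrank_of_lt hlt
    have hp' : finrank ℝ p = 1 := hp
    omega
  have hl' : finrank ℝ l = 2 := hl
  exact (Submodule.eq_of_le_of_finrank_le hle (by omega)).symm

lemma line_unique {p q l l' : Submodule ℝ V3} (hp : IsProjPoint p) (hq : IsProjPoint q)
    (hl : IsProjLine l) (hl' : IsProjLine l') (hpq : p ≠ q)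
    (h1 : p ≤ l) (h2 : q ≤ l) (h3 : p ≤ l') (h4 : q ≤ l') : l = l' := by
  rw [sup_of_points hp hq hl hpq h1 h2, sup_of_points hp hq hl' hpq h3 h4]

lemma span_pair_eq_sup (u v : V3) : span ℝ {u, v} = span ℝ {u} ⊔ span ℝ {v} := by
  rw [show ({u, v} : Set V3) = {u} ∪ {v} by rw [Set.insert_eq], Submodule.span_union]

lemma line_span {p q l : Submodule ℝ V3} {u v : V3} (hl : IsProjLine l)
    (hpu : p = span ℝ {u}) (hqv : q = span ℝ {v}) (hu : u ≠ 0) (hv : v ≠ 0)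
    (hpq : p ≠ q) (h1 : p ≤ l) (h2 : q ≤ l) : l = span ℝ {u, v} := by
  rw [span_pair_eq_sup, ← hpu, ← hqv]
  exact sup_of_points (hpu ▸ proj_point_span hu) (hqv ▸ proj_point_span hv) hl hpq h1 h2

lemma smul_span' {u : V3} {a : ℝ} (ha : a ≠ 0) : span ℝ {a • u} = span ℝ {u} :=
  Submodule.span_singleton_smul_eq (isUnit_iff_ne_zero.mpr ha) u

lemma smul_cancel {x y : V3} {k : ℝ} (hk : k ≠ 0) (h : k • x = y) : x = k⁻¹ • y := by
  rw [← h, smul_smul, inv_mul_cancel₀ hk, one_smul]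

lemma coeff_ne_zero {c x y : V3} {a b : ℝ} (h : a • x + b • y = c) (hc : c ≠ 0)
    (hne : span ℝ {c} ≠ span ℝ {y}) : a ≠ 0 := by
  intro ha
  subst ha
  rw [zero_smul, zero_add] at h
  have hb : b ≠ 0 := by rintro rfl; rw [zero_smul] at h; exact hc h.symm
  exact hne (h ▸ smul_span' hb)

lemma indep3 {u v w : V3} (hu : u ≠ 0) (hv : v ≠ 0)
    (huv : span ℝ {u} ≠ span ℝ {v}) (hw : w ∉ span ℝ ({u, v} : Set V3)) :
    ∀ a b c : ℝ, a • u + b • v + c • w = 0 → a = 0 ∧ b = 0 ∧ c = 0 := by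
  intro a b c h
  have hc : c = 0 := by
    by_contra hc
    apply hw
    rw [Submodule.mem_span_pair]
    have h4 : c • w = (-a) • u + (-b) • v := by
      linear_combination (norm := module) h
    have h5 := smul_cancel hc h4
    exact ⟨c⁻¹ * -a, c⁻¹ * -b, by rw [h5]; module⟩
  subst hc
  rw [zero_smul, add_zero] at h
  have hb : b = 0 := by
    by_contra hb
    have h4 : b • v = (-a) • u := by linear_combination (norm := module) h
    have h5 : v = (b⁻¹ * -a) • u := by rw [smul_cancel hb h4]; module
    have hab : b⁻¹ * -a ≠ 0 := fun h0 => hv (by rw [h5, h0, zero_smul])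
    have : span ℝ {v} = span ℝ {u} := by rw [h5]; exact smul_span' hab
    exact huv this.symm
  subst hb
  rw [zero_smul, add_zero] at h
  exact ⟨(smul_eq_zero.mp h).resolve_right hu, rfl, rfl⟩

variable {α : Type*} [DecidableEq α]

lemma exists_third {s : Finset α} {x y : α} (h : 3 ≤ s.card) (hx : x ∈ s) (hy : y ∈ s) :
    ∃ z ∈ s, z ≠ x ∧ z ≠ y := by
  by_contra hcon
  push_neg at hcon
  have hsub : s ⊆ insert x {y} := by
    intro t ht
    by_cases htx : t = x
    · simp [htx]
    · simp [hcon t ht htx]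
  have h1 := Finset.card_le_card hsub
  have h2 := Finset.card_insert_le x ({y} : Finset α)
  simp only [Finset.card_singleton] at h2
  omega

lemma card3_extract {s : Finset α} {x : α} (h : s.card = 3) (hx : x ∈ s) :
    ∃ y z, y ∈ s ∧ z ∈ s ∧ y ≠ x ∧ z ≠ x ∧ y ≠ z := by
  have h1 : (s.erase x).card = 2 := by rw [Finset.card_erase_of_mem hx, h]
  obtain ⟨y, z, hyz, hs⟩ := Finset.card_eq_two.mp h1
  have hy : y ∈ s.erase x := by rw [hs]; simp
  have hz : z ∈ s.erase x := by rw [hs]; simp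
  exact ⟨y, z, Finset.mem_of_mem_erase hy, Finset.mem_of_mem_erase hz,
    Finset.ne_of_mem_erase hy, Finset.ne_of_mem_erase hz, hyz⟩

lemma card3_complete {s : Finset α} {x y z : α} (h : s.card = 3) (hx : x ∈ s) (hy : y ∈ s)
    (hz : z ∈ s) (hxy : x ≠ y) (hxz : x ≠ z) (hyz : y ≠ z) :
    ∀ t ∈ s, t = x ∨ t = y ∨ t = z := by
  have hsub : ({x, y, z} : Finset α) ⊆ s := by
    intro t ht
    simp only [Finset.mem_insert, Finset.mem_singleton] at ht
    rcases ht with rfl | rfl | rfl <;> assumption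
  have hcard : ({x, y, z} : Finset α).card = 3 := by
    rw [Finset.card_insert_of_notMem (by simp [hxy, hxz]),
      Finset.card_insert_of_notMem (by simp [hyz]), Finset.card_singleton]
  have heq := Finset.eq_of_subset_of_card_le hsub (by omega)
  intro t ht
  have : t ∈ ({x, y, z} : Finset α) := heq ▸ ht
  simpa using this

/-- The set of neighbours of a point `p`: points of `P` sharing a line of `L` with `p`. -/
lemma neighbors (P L : Finset (Submodule ℝ (Fin 3 → ℝ)))
    (hP : ∀ p ∈ P, IsProjPoint p) (hL : ∀ l ∈ L, IsProjLine l)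
    {p : Submodule ℝ (Fin 3 → ℝ)} (hpP : p ∈ P) :
    ∃ B : Finset (Submodule ℝ (Fin 3 → ℝ)), B ⊆ P.erase p ∧
      B.card = ∑ l ∈ L.filter (fun l => p ≤ l), (lineDeg P l - 1) ∧
      ∀ q, q ∈ B ↔ (q ∈ P ∧ q ≠ p ∧ ∃ l ∈ L, p ≤ l ∧ q ≤ l) := by
  set Lp := L.filter (fun l => p ≤ l) with hLp
  set f : Submodule ℝ (Fin 3 → ℝ) → Finset (Submodule ℝ (Fin 3 → ℝ)) :=
    fun l => (P.filter (fun q => q ≤ l)).erase p with hf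
  refine ⟨Lp.biUnion f, ?_, ?_, ?_⟩
  · intro q hq
    rw [Finset.mem_biUnion] at hq
    obtain ⟨l, _, hql⟩ := hq
    rw [Finset.mem_erase] at hql ⊢
    exact ⟨hql.1, (Finset.mem_filter.mp hql.2).1⟩
  · rw [Finset.card_biUnion]
    · apply Finset.sum_congr rfl
      intro l hl'
      rw [Finset.mem_filter] at hl'
      have hpmem : p ∈ P.filter (fun q => q ≤ l) := Finset.mem_filter.mpr ⟨hpP, hl'.2⟩
      rw [hf]
      simp only [lineDeg]
      rw [Finset.card_erase_of_mem hpmem]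
    · intro l1 hl1 l2 hl2 hne
      rw [hLp, Finset.mem_coe, Finset.mem_filter] at hl1 hl2
      simp only [Finset.disjoint_left]
      intro q hq1 hq2
      rw [hf] at hq1 hq2
      rw [Finset.mem_erase, Finset.mem_filter] at hq1 hq2
      exact hne (line_unique (hP p hpP) (hP q hq1.2.1) (hL l1 hl1.1) (hL l2 hl2.1)
        (fun h => hq1.1 h.symm) hl1.2 hq1.2.2 hl2.2 hq2.2.2)
  · intro q
    rw [Finset.mem_biUnion]
    constructor
    · rintro ⟨l, hl', hql⟩
      rw [hLp, Finset.mem_filter] at hl'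
      rw [hf, Finset.mem_erase, Finset.mem_filter] at hql
      exact ⟨hql.2.1, hql.1, l, hl'.1, hl'.2, hql.2.2⟩
    · rintro ⟨hqP, hqp, l, hlL, hpl, hql⟩
      exact ⟨l, Finset.mem_filter.mpr ⟨hlL, hpl⟩,
        Finset.mem_erase.mpr ⟨hqp, Finset.mem_filter.mpr ⟨hqP, hql⟩⟩⟩

/-- dual counting: lines through the points of `l`. -/
lemma neighbors_dual (P L : Finset (Submodule ℝ (Fin 3 → ℝ)))
    (hP : ∀ p ∈ P, IsProjPoint p) (hL : ∀ l ∈ L, IsProjLine l)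
    {l : Submodule ℝ (Fin 3 → ℝ)} (hlL : l ∈ L) :
    ∑ q ∈ P.filter (fun q => q ≤ l), (pointDeg L q - 1) ≤ L.card - 1 := by
  set Pl := P.filter (fun q => q ≤ l) with hPl
  set f : Submodule ℝ (Fin 3 → ℝ) → Finset (Submodule ℝ (Fin 3 → ℝ)) :=
    fun q => (L.filter (fun m => q ≤ m)).erase l with hf
  have hsub : Pl.biUnion f ⊆ L.erase l := by
    intro m hm
    rw [Finset.mem_biUnion] at hm
    obtain ⟨q, _, hmq⟩ := hm
    rw [hf, Finset.mem_erase, Finset.mem_filter] at hmq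
    rw [Finset.mem_erase]
    exact ⟨hmq.1, hmq.2.1⟩
  have hcard : (Pl.biUnion f).card = ∑ q ∈ Pl, (pointDeg L q - 1) := by
    rw [Finset.card_biUnion]
    · apply Finset.sum_congr rfl
      intro q hq
      rw [hPl, Finset.mem_filter] at hq
      have : l ∈ L.filter (fun m => q ≤ m) := Finset.mem_filter.mpr ⟨hlL, hq.2⟩
      rw [hf]
      simp only [pointDeg]
      rw [Finset.card_erase_of_mem this]
    · intro q1 hq1 q2 hq2 hne
      rw [hPl, Finset.mem_coe, Finset.mem_filter] at hq1 hq2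
      simp only [Finset.disjoint_left]
      intro m hm1 hm2
      rw [hf, Finset.mem_erase, Finset.mem_filter] at hm1 hm2
      exact hm1.1 (line_unique (hP q1 hq1.1) (hP q2 hq2.1) (hL m hm1.2.1) (hL l hlL)
        hne hm1.2.2 hm2.2.2 hq1.2 hq2.2)
  calc ∑ q ∈ Pl, (pointDeg L q - 1) = (Pl.biUnion f).card := hcard.symm
    _ ≤ (L.erase l).card := Finset.card_le_card hsub
    _ = L.card - 1 := Finset.card_erase_of_mem hlL

/-- structure of the three lines through a point, and their points. -/
lemma point_structure (P L : Finset (Submodule ℝ (Fin 3 → ℝ)))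
    (hP3 : ∀ p ∈ P, pointDeg L p = 3) (hL3 : ∀ l ∈ L, lineDeg P l = 3)
    {p : Submodule ℝ (Fin 3 → ℝ)} (hp : p ∈ P) :
    ∃ l1 l2 l3 a1 b1 a2 b2 a3 b3 : Submodule ℝ (Fin 3 → ℝ),
      l1 ∈ L ∧ l2 ∈ L ∧ l3 ∈ L ∧ l1 ≠ l2 ∧ l1 ≠ l3 ∧ l2 ≠ l3 ∧
      p ≤ l1 ∧ p ≤ l2 ∧ p ≤ l3 ∧ (∀ l ∈ L, p ≤ l → l = l1 ∨ l = l2 ∨ l = l3) ∧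
      a1 ∈ P ∧ b1 ∈ P ∧ a2 ∈ P ∧ b2 ∈ P ∧ a3 ∈ P ∧ b3 ∈ P ∧
      a1 ≠ p ∧ b1 ≠ p ∧ a1 ≠ b1 ∧ a2 ≠ p ∧ b2 ≠ p ∧ a2 ≠ b2 ∧ a3 ≠ p ∧ b3 ≠ p ∧ a3 ≠ b3 ∧
      a1 ≤ l1 ∧ b1 ≤ l1 ∧ a2 ≤ l2 ∧ b2 ≤ l2 ∧ a3 ≤ l3 ∧ b3 ≤ l3 ∧
      (∀ x ∈ P, x ≤ l1 → x = p ∨ x = a1 ∨ x = b1) ∧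
      (∀ x ∈ P, x ≤ l2 → x = p ∨ x = a2 ∨ x = b2) ∧
      (∀ x ∈ P, x ≤ l3 → x = p ∨ x = a3 ∨ x = b3) := by
  have hdeg := hP3 p hp
  rw [pointDeg] at hdeg
  obtain ⟨l1, l2, l3, h12, h13, h23, hset⟩ := Finset.card_eq_three.mp hdeg
  have hmem : ∀ l ∈ ({l1, l2, l3} : Finset (Submodule ℝ (Fin 3 → ℝ))),
      l ∈ L ∧ p ≤ l := by
    intro l hl
    rw [← hset] at hl
    exact ⟨(Finset.mem_filter.mp hl).1, (Finset.mem_filter.mp hl).2⟩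
  have h1 := hmem l1 (by simp)
  have h2 := hmem l2 (by simp)
  have h3 := hmem l3 (by simp)
  have hcompl : ∀ l ∈ L, p ≤ l → l = l1 ∨ l = l2 ∨ l = l3 := by
    intro l hl hpl
    have : l ∈ ({l1, l2, l3} : Finset (Submodule ℝ (Fin 3 → ℝ))) := by
      rw [← hset]; exact Finset.mem_filter.mpr ⟨hl, hpl⟩
    simpa using this
  have hpts : ∀ l, l ∈ L → p ≤ l → ∃ a b : Submodule ℝ (Fin 3 → ℝ),
      a ∈ P ∧ b ∈ P ∧ a ≠ p ∧ b ≠ p ∧ a ≠ b ∧ a ≤ l ∧ b ≤ l ∧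
      (∀ x ∈ P, x ≤ l → x = p ∨ x = a ∨ x = b) := by
    intro l hl hpl
    have hld := hL3 l hl
    rw [lineDeg] at hld
    have hpf : p ∈ P.filter (fun q => q ≤ l) := Finset.mem_filter.mpr ⟨hp, hpl⟩
    obtain ⟨a, b, ha, hb, hap, hbp, hab⟩ := card3_extract hld hpf
    rw [Finset.mem_filter] at ha hb
    refine ⟨a, b, ha.1, hb.1, hap, hbp, hab, ha.2, hb.2, ?_⟩
    intro x hx hxl
    have := card3_complete hld hpf (Finset.mem_filter.mpr ⟨ha.1, ha.2⟩)
      (Finset.mem_filter.mpr ⟨hb.1, hb.2⟩) (Ne.symm hap) (Ne.symm hbp) hab x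
      (Finset.mem_filter.mpr ⟨hx, hxl⟩)
    exact this
  obtain ⟨a1, b1, k1⟩ := hpts l1 h1.1 h1.2
  obtain ⟨a2, b2, k2⟩ := hpts l2 h2.1 h2.2
  obtain ⟨a3, b3, k3⟩ := hpts l3 h3.1 h3.2
  exact ⟨l1, l2, l3, a1, b1, a2, b2, a3, b3, h1.1, h2.1, h3.1, h12, h13, h23,
    h1.2, h2.2, h3.2, hcompl, k1.1, k1.2.1, k2.1, k2.2.1, k3.1, k3.2.1,
    k1.2.2.1, k1.2.2.2.1, k1.2.2.2.2.1, k2.2.2.1, k2.2.2.2.1, k2.2.2.2.2.1,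
    k3.2.2.1, k3.2.2.2.1, k3.2.2.2.2.1,
    k1.2.2.2.2.2.1, k1.2.2.2.2.2.2.1, k2.2.2.2.2.2.1, k2.2.2.2.2.2.2.1,
    k3.2.2.2.2.2.1, k3.2.2.2.2.2.2.1,
    k1.2.2.2.2.2.2.2, k2.2.2.2.2.2.2.2, k3.2.2.2.2.2.2.2⟩

lemma degree_bound (P L : Finset (Submodule ℝ (Fin 3 → ℝ)))
    (hP : ∀ p ∈ P, IsProjPoint p) (hL : ∀ l ∈ L, IsProjLine l)
    (hdegL : ∀ l ∈ L, 3 ≤ lineDeg P l)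
    {p : Submodule ℝ (Fin 3 → ℝ)} (hpP : p ∈ P) :
    2 * pointDeg L p ≤ P.card - 1 := by
  obtain ⟨B, hBsub, hBcard, _⟩ := neighbors P L hP hL hpP
  have h1 : B.card ≤ P.card - 1 := by
    have := Finset.card_le_card hBsub
    rwa [Finset.card_erase_of_mem hpP] at this
  have h2 : (L.filter (fun l => p ≤ l)).card • 2 ≤ ∑ l ∈ L.filter (fun l => p ≤ l),
      (lineDeg P l - 1) := by
    apply Finset.card_nsmul_le_sum
    intro l hl
    have := hdegL l (Finset.mem_filter.mp hl).1
    omega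
  rw [smul_eq_mul] at h2
  rw [pointDeg]
  omega

lemma degrees (P L : Finset (Submodule ℝ (Fin 3 → ℝ)))
    (hP : ∀ p ∈ P, IsProjPoint p) (hL : ∀ l ∈ L, IsProjLine l)
    (hcard : P.card = L.card) (hn8 : P.card ≤ 8) (hne : P.Nonempty)
    (hdegP : ∀ p ∈ P, pointDeg L p = 3 ∨ pointDeg L p = 4)
    (hdegL : ∀ l ∈ L, lineDeg P l = 3 ∨ lineDeg P l = 4) :
    (∀ p ∈ P, pointDeg L p = 3) ∧ (∀ l ∈ L, lineDeg P l = 3) ∧ 7 ≤ P.card := by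
  have hL3 : ∀ l ∈ L, 3 ≤ lineDeg P l := fun l hl => by rcases hdegL l hl with h | h <;> omega
  have hbd : ∀ p ∈ P, 2 * pointDeg L p ≤ P.card - 1 :=
    fun p hp => degree_bound P L hP hL hL3 hp
  obtain ⟨p0, hp0⟩ := hne
  have h7 : 7 ≤ P.card := by
    have := hbd p0 hp0
    rcases hdegP p0 hp0 with h | h <;> omega
  have hP3 : ∀ p ∈ P, pointDeg L p = 3 := by
    intro p hp
    have := hbd p hp
    rcases hdegP p hp with h | h
    · exact h
    · omega
  refine ⟨hP3, ?_, h7⟩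
  intro l hl
  have hdual := neighbors_dual P L hP hL hl
  have h2 : (P.filter (fun q => q ≤ l)).card • 2 ≤ ∑ q ∈ P.filter (fun q => q ≤ l),
      (pointDeg L q - 1) := by
    apply Finset.card_nsmul_le_sum
    intro q hq
    have := hP3 q (Finset.mem_filter.mp hq).1
    omega
  rw [smul_eq_mul] at h2
  have hld : lineDeg P l = (P.filter (fun q => q ≤ l)).card := rfl
  rcases hdegL l hl with h | h
  · exact h
  · omega

set_option maxHeartbeats 1000000 in
lemma chase7 (P L : Finset (Submodule ℝ (Fin 3 → ℝ)))
    (hP : ∀ p ∈ P, IsProjPoint p) (hL : ∀ l ∈ L, IsProjLine l)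
    (hP3 : ∀ p ∈ P, pointDeg L p = 3) (hL3 : ∀ l ∈ L, lineDeg P l = 3)
    {p0 a1 b1 a2 b2 a3 b3 l1 l2 l3 e : Submodule ℝ (Fin 3 → ℝ)}
    (hp0P : p0 ∈ P) (ha1P : a1 ∈ P) (hb1P : b1 ∈ P) (ha2P : a2 ∈ P) (hb2P : b2 ∈ P)
    (ha3P : a3 ∈ P) (hb3P : b3 ∈ P)
    (d1 : a1 ≠ p0) (d2 : b1 ≠ p0) (d3 : a1 ≠ b1)
    (d4 : a2 ≠ p0) (d5 : b2 ≠ p0) (d6 : a2 ≠ b2)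
    (d7 : a3 ≠ p0) (d8 : b3 ≠ p0) (d9 : a3 ≠ b3)
    (hl1L : l1 ∈ L) (hl2L : l2 ∈ L) (hl3L : l3 ∈ L) (heL : e ∈ L)
    (h12 : l1 ≠ l2) (h13 : l1 ≠ l3) (h23 : l2 ≠ l3)
    (hp0l1 : p0 ≤ l1) (ha1l1 : a1 ≤ l1) (hb1l1 : b1 ≤ l1)
    (hp0l2 : p0 ≤ l2) (ha2l2 : a2 ≤ l2) (hb2l2 : b2 ≤ l2)
    (hp0l3 : p0 ≤ l3) (ha3l3 : a3 ≤ l3) (hb3l3 : b3 ≤ l3)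
    (ha1e : a1 ≤ e) (ha2e : a2 ≤ e) (ha3e : a3 ≤ e)
    (hp0lines : ∀ l ∈ L, p0 ≤ l → l = l1 ∨ l = l2 ∨ l = l3)
    (hPX : ∀ t ∈ P, t = p0 ∨ t = a1 ∨ t = b1 ∨ t = a2 ∨ t = b2 ∨ t = a3 ∨ t = b3) :
    False := by
  have hPp0 := hP p0 hp0P
  have hPa1 := hP a1 ha1P; have hPb1 := hP b1 hb1P
  have hPa2 := hP a2 ha2P; have hPb2 := hP b2 hb2P
  have hPa3 := hP a3 ha3P; have hPb3 := hP b3 hb3P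
  -- cross distinctness
  have cr : ∀ x : Submodule ℝ (Fin 3 → ℝ), ∀ lx ly : Submodule ℝ (Fin 3 → ℝ),
      x ∈ P → lx ∈ L → ly ∈ L → lx ≠ ly → x ≠ p0 → x ≤ lx → x ≤ ly →
      p0 ≤ lx → p0 ≤ ly → False := by
    intro x lx ly hx hlx hly hll hxp h1 h2 h3 h4
    exact hll (line_unique (hP x hx) hPp0 (hL lx hlx) (hL ly hly) hxp h1 h3 h2 h4)
  have na12 : a1 ≠ a2 := fun h => cr a1 l1 l2 ha1P hl1L hl2L h12 d1 ha1l1 (h ▸ ha2l2) hp0l1 hp0l2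
  have na1b2 : a1 ≠ b2 := fun h => cr a1 l1 l2 ha1P hl1L hl2L h12 d1 ha1l1 (h ▸ hb2l2) hp0l1 hp0l2
  have na13 : a1 ≠ a3 := fun h => cr a1 l1 l3 ha1P hl1L hl3L h13 d1 ha1l1 (h ▸ ha3l3) hp0l1 hp0l3
  have na1b3 : a1 ≠ b3 := fun h => cr a1 l1 l3 ha1P hl1L hl3L h13 d1 ha1l1 (h ▸ hb3l3) hp0l1 hp0l3
  have nb1a2 : b1 ≠ a2 := fun h => cr b1 l1 l2 hb1P hl1L hl2L h12 d2 hb1l1 (h ▸ ha2l2) hp0l1 hp0l2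
  have nb1b2 : b1 ≠ b2 := fun h => cr b1 l1 l2 hb1P hl1L hl2L h12 d2 hb1l1 (h ▸ hb2l2) hp0l1 hp0l2
  have nb1a3 : b1 ≠ a3 := fun h => cr b1 l1 l3 hb1P hl1L hl3L h13 d2 hb1l1 (h ▸ ha3l3) hp0l1 hp0l3
  have nb1b3 : b1 ≠ b3 := fun h => cr b1 l1 l3 hb1P hl1L hl3L h13 d2 hb1l1 (h ▸ hb3l3) hp0l1 hp0l3
  have na23 : a2 ≠ a3 := fun h => cr a2 l2 l3 ha2P hl2L hl3L h23 d4 ha2l2 (h ▸ ha3l3) hp0l2 hp0l3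
  have na2b3 : a2 ≠ b3 := fun h => cr a2 l2 l3 ha2P hl2L hl3L h23 d4 ha2l2 (h ▸ hb3l3) hp0l2 hp0l3
  have nb2a3 : b2 ≠ a3 := fun h => cr b2 l2 l3 hb2P hl2L hl3L h23 d5 hb2l2 (h ▸ ha3l3) hp0l2 hp0l3
  have nb2b3 : b2 ≠ b3 := fun h => cr b2 l2 l3 hb2P hl2L hl3L h23 d5 hb2l2 (h ▸ hb3l3) hp0l2 hp0l3
  -- line completeness
  have complOf : ∀ l x y z : Submodule ℝ (Fin 3 → ℝ), l ∈ L → x ∈ P → y ∈ P → z ∈ P →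
      x ≤ l → y ≤ l → z ≤ l → x ≠ y → x ≠ z → y ≠ z →
      ∀ t ∈ P, t ≤ l → t = x ∨ t = y ∨ t = z := by
    intro l x y z hlL hx hy hz hxl hyl hzl hxy hxz hyz t ht htl
    exact card3_complete (hL3 l hlL) (Finset.mem_filter.mpr ⟨hx, hxl⟩)
      (Finset.mem_filter.mpr ⟨hy, hyl⟩) (Finset.mem_filter.mpr ⟨hz, hzl⟩)
      hxy hxz hyz t (Finset.mem_filter.mpr ⟨ht, htl⟩)
  have compl1 := complOf l1 p0 a1 b1 hl1L hp0P ha1P hb1P hp0l1 ha1l1 hb1l1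
    (Ne.symm d1) (Ne.symm d2) d3
  have compl2 := complOf l2 p0 a2 b2 hl2L hp0P ha2P hb2P hp0l2 ha2l2 hb2l2
    (Ne.symm d4) (Ne.symm d5) d6
  have compl3 := complOf l3 p0 a3 b3 hl3L hp0P ha3P hb3P hp0l3 ha3l3 hb3l3
    (Ne.symm d7) (Ne.symm d8) d9
  have comple := complOf e a1 a2 a3 heL ha1P ha2P ha3P ha1e ha2e ha3e na12 na13 na23
  -- p0 is not on e
  have hp0e : ¬ p0 ≤ e := by
    intro h
    rcases hp0lines e heL h with rfl | rfl | rfl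
    · rcases compl1 a2 ha2P ha2e with h' | h' | h'
      · exact d4 h'
      · exact na12 h'.symm
      · exact nb1a2 h'.symm
    · rcases compl2 a1 ha1P ha1e with h' | h' | h'
      · exact d1 h'
      · exact na12 h'
      · exact na1b2 h'
    · rcases compl3 a1 ha1P ha1e with h' | h' | h'
      · exact d1 h'
      · exact na13 h'
      · exact na1b3 h'
  have hel1 : e ≠ l1 := fun h => hp0e (h ▸ hp0l1)
  -- third line through a1
  have hdeg1 : (L.filter fun l => a1 ≤ l).card = 3 := hP3 a1 ha1P
  obtain ⟨n2, hn2f, hn2l1, hn2e⟩ := exists_third (by omega : 3 ≤ (L.filter fun l => a1 ≤ l).card)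
    (Finset.mem_filter.mpr ⟨hl1L, ha1l1⟩) (Finset.mem_filter.mpr ⟨heL, ha1e⟩)
  have hn2L : n2 ∈ L := (Finset.mem_filter.mp hn2f).1
  have ha1n2 : a1 ≤ n2 := (Finset.mem_filter.mp hn2f).2
  -- classify the other points of n2
  have hclass : ∀ t : Submodule ℝ (Fin 3 → ℝ), t ∈ P → t ≤ n2 → t ≠ a1 → t = b2 ∨ t = b3 := by
    intro t htP htn2 hta1
    rcases hPX t htP with rfl | rfl | rfl | rfl | rfl | rfl | rfl
    · exfalso
      rcases hp0lines n2 hn2L htn2 with rfl | rfl | rfl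
      · exact hn2l1 rfl
      · rcases compl2 a1 ha1P ha1n2 with h' | h' | h'
        · exact d1 h'
        · exact na12 h'
        · exact na1b2 h'
      · rcases compl3 a1 ha1P ha1n2 with h' | h' | h'
        · exact d1 h'
        · exact na13 h'
        · exact na1b3 h'
    · exact absurd rfl hta1
    · exact absurd (line_unique hPa1 hPb1 (hL l1 hl1L) (hL n2 hn2L) d3 ha1l1 hb1l1 ha1n2 htn2)
        (Ne.symm hn2l1)
    · exact absurd (line_unique hPa1 hPa2 (hL e heL) (hL n2 hn2L) na12 ha1e ha2e ha1n2 htn2)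
        (Ne.symm hn2e)
    · exact Or.inl rfl
    · exact absurd (line_unique hPa1 hPa3 (hL e heL) (hL n2 hn2L) na13 ha1e ha3e ha1n2 htn2)
        (Ne.symm hn2e)
    · exact Or.inr rfl
  obtain ⟨s, s', hs, hs', hsa1, hs'a1, hss'⟩ := card3_extract (hL3 n2 hn2L)
    (Finset.mem_filter.mpr ⟨ha1P, ha1n2⟩)
  rw [Finset.mem_filter] at hs hs'
  have hsne : s ≠ a1 := fun h => hsa1 (by rw [h])
  have hs'ne : s' ≠ a1 := fun h => hs'a1 (by rw [h])
  have hb2b3n2 : b2 ≤ n2 ∧ b3 ≤ n2 := by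
    rcases hclass s hs.1 hs.2 hsne with rfl | rfl <;>
      rcases hclass s' hs'.1 hs'.2 hs'ne with rfl | rfl
    · exact absurd rfl hss'
    · exact ⟨hs.2, hs'.2⟩
    · exact ⟨hs'.2, hs.2⟩
    · exact absurd rfl hss'
  obtain ⟨hb2n2, hb3n2⟩ := hb2b3n2
  have compln2 := complOf n2 a1 b2 b3 hn2L ha1P hb2P hb3P ha1n2 hb2n2 hb3n2 na1b2 na1b3 nb2b3
  -- the two other lines through b1
  have hdegb1 : (L.filter fun l => b1 ≤ l).card = 3 := hP3 b1 hb1P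
  obtain ⟨r, r', hr, hr', hrl1, hr'l1, hrr'⟩ := card3_extract hdegb1
    (Finset.mem_filter.mpr ⟨hl1L, hb1l1⟩)
  rw [Finset.mem_filter] at hr hr'
  have hclassb1 : ∀ m : Submodule ℝ (Fin 3 → ℝ), m ∈ L → b1 ≤ m → m ≠ l1 →
      (a2 ≤ m ∧ b3 ≤ m) ∨ (b2 ≤ m ∧ a3 ≤ m) := by
    intro m hmL hb1m hml1
    have hcl : ∀ t : Submodule ℝ (Fin 3 → ℝ), t ∈ P → t ≤ m → t ≠ b1 →
        t = a2 ∨ t = b2 ∨ t = a3 ∨ t = b3 := by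
      intro t htP htm htb1
      rcases hPX t htP with rfl | rfl | rfl | rfl | rfl | rfl | rfl
      · exfalso
        rcases hp0lines m hmL htm with rfl | rfl | rfl
        · exact hml1 rfl
        · rcases compl2 b1 hb1P hb1m with h' | h' | h'
          · exact d2 h'
          · exact nb1a2 h'
          · exact nb1b2 h'
        · rcases compl3 b1 hb1P hb1m with h' | h' | h'
          · exact d2 h'
          · exact nb1a3 h'
          · exact nb1b3 h'
      · exact absurd (line_unique hPa1 hPb1 (hL l1 hl1L) (hL m hmL) d3 ha1l1 hb1l1 htm hb1m)
          (Ne.symm hml1)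
      · exact absurd rfl htb1
      · exact Or.inl rfl
      · exact Or.inr (Or.inl rfl)
      · exact Or.inr (Or.inr (Or.inl rfl))
      · exact Or.inr (Or.inr (Or.inr rfl))
    obtain ⟨y, z, hy, hz, hyb1, hzb1, hyz⟩ := card3_extract (hL3 m hmL)
      (Finset.mem_filter.mpr ⟨hb1P, hb1m⟩)
    rw [Finset.mem_filter] at hy hz
    have hyne : y ≠ b1 := fun h => hyb1 (by rw [h])
    have hzne : z ≠ b1 := fun h => hzb1 (by rw [h])
    -- refutation helpers
    have noth : ∀ w1 w2 : Submodule ℝ (Fin 3 → ℝ), w1 ≤ m → w2 ≤ m → w1 ≠ w2 →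
        ∀ l' : Submodule ℝ (Fin 3 → ℝ), l' ∈ L → w1 ≤ l' → w2 ≤ l' → ¬ b1 ≤ l' →
        w1 ∈ P → w2 ∈ P → False := by
      intro w1 w2 hw1 hw2 hw12 l' hl'L hw1l' hw2l' hnb1 hw1P hw2P
      exact hnb1 ((line_unique (hP w1 hw1P) (hP w2 hw2P) (hL m hmL) (hL l' hl'L)
        hw12 hw1 hw2 hw1l' hw2l') ▸ hb1m)
    have hnb1l2 : ¬ b1 ≤ l2 := by
      intro h
      rcases compl2 b1 hb1P h with h' | h' | h'
      · exact d2 h'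
      · exact nb1a2 h'
      · exact nb1b2 h'
    have hnb1l3 : ¬ b1 ≤ l3 := by
      intro h
      rcases compl3 b1 hb1P h with h' | h' | h'
      · exact d2 h'
      · exact nb1a3 h'
      · exact nb1b3 h'
    have hnb1e : ¬ b1 ≤ e := by
      intro h
      rcases comple b1 hb1P h with h' | h' | h'
      · exact d3 h'.symm
      · exact nb1a2 h'
      · exact nb1a3 h'
    have hnb1n2 : ¬ b1 ≤ n2 := by
      intro h
      rcases compln2 b1 hb1P h with h' | h' | h'
      · exact d3 h'.symm
      · exact nb1b2 h'
      · exact nb1b3 h'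
    have main : ∀ y' z' : Submodule ℝ (Fin 3 → ℝ), y' ∈ P → z' ∈ P → y' ≤ m → z' ≤ m →
        y' ≠ z' → y' = a2 → z' = b2 ∨ z' = a3 ∨ z' = b3 →
        (a2 ≤ m ∧ b3 ≤ m) ∨ (b2 ≤ m ∧ a3 ≤ m) := by
      intro y' z' hy'P hz'P hy'm hz'm hy'z' hy'a2 hz'cl
      rw [hy'a2] at hy'm
      rcases hz'cl with h | h | h <;> rw [h] at hz'm
      · exact absurd (noth a2 b2 hy'm hz'm d6 l2 hl2L ha2l2 hb2l2 hnb1l2 ha2P hb2P) id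
      · exact absurd (noth a2 a3 hy'm hz'm na23 e heL ha2e ha3e hnb1e ha2P ha3P) id
      · exact Or.inl ⟨hy'm, hz'm⟩
    have mainb2 : ∀ y' z' : Submodule ℝ (Fin 3 → ℝ), y' ∈ P → z' ∈ P → y' ≤ m → z' ≤ m →
        y' ≠ z' → y' = b2 → z' = a3 ∨ z' = b3 →
        (a2 ≤ m ∧ b3 ≤ m) ∨ (b2 ≤ m ∧ a3 ≤ m) := by
      intro y' z' hy'P hz'P hy'm hz'm hy'z' hy'b2 hz'cl
      rw [hy'b2] at hy'm
      rcases hz'cl with h | h <;> rw [h] at hz'm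
      · exact Or.inr ⟨hy'm, hz'm⟩
      · exact absurd (noth b2 b3 hy'm hz'm nb2b3 n2 hn2L hb2n2 hb3n2 hnb1n2 hb2P hb3P) id
    have maina3b3 : ∀ y' z' : Submodule ℝ (Fin 3 → ℝ), y' ∈ P → z' ∈ P → y' ≤ m → z' ≤ m →
        y' = a3 → z' = b3 → False := by
      intro y' z' hy'P hz'P hy'm hz'm h1 h2
      rw [h1] at hy'm
      rw [h2] at hz'm
      exact noth a3 b3 hy'm hz'm d9 l3 hl3L ha3l3 hb3l3 hnb1l3 ha3P hb3P
    rcases hcl y hy.1 hy.2 hyne with ey | ey | ey | ey <;>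
      rcases hcl z hz.1 hz.2 hzne with ez | ez | ez | ez
    · exact absurd (ey ▸ ez ▸ rfl : y = z) hyz
    · exact main y z hy.1 hz.1 hy.2 hz.2 hyz ey (Or.inl ez)
    · exact main y z hy.1 hz.1 hy.2 hz.2 hyz ey (Or.inr (Or.inl ez))
    · exact main y z hy.1 hz.1 hy.2 hz.2 hyz ey (Or.inr (Or.inr ez))
    · exact main z y hz.1 hy.1 hz.2 hy.2 (Ne.symm hyz) ez (Or.inl ey)
    · exact absurd (ey ▸ ez ▸ rfl : y = z) hyz
    · exact mainb2 y z hy.1 hz.1 hy.2 hz.2 hyz ey (Or.inl ez)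
    · exact mainb2 y z hy.1 hz.1 hy.2 hz.2 hyz ey (Or.inr ez)
    · exact main z y hz.1 hy.1 hz.2 hy.2 (Ne.symm hyz) ez (Or.inr (Or.inl ey))
    · exact mainb2 z y hz.1 hy.1 hz.2 hy.2 (Ne.symm hyz) ez (Or.inl ey)
    · exact absurd (ey ▸ ez ▸ rfl : y = z) hyz
    · exact absurd (maina3b3 y z hy.1 hz.1 hy.2 hz.2 ey ez) id
    · exact main z y hz.1 hy.1 hz.2 hy.2 (Ne.symm hyz) ez (Or.inr (Or.inr ey))
    · exact mainb2 z y hz.1 hy.1 hz.2 hy.2 (Ne.symm hyz) ez (Or.inr ey)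
    · exact absurd (maina3b3 z y hz.1 hy.1 hz.2 hy.2 ez ey) id
    · exact absurd (ey ▸ ez ▸ rfl : y = z) hyz
  have hrL : r ∈ L := hr.1
  have hr'L : r' ∈ L := hr'.1
  have hres := hclassb1 r hr.1 hr.2 hrl1
  have hres' := hclassb1 r' hr'.1 hr'.2 hr'l1
  -- one of r, r' is {b1,a2,b3}, the other {b1,b2,a3}
  have hn34 : ∃ n3 n4 : Submodule ℝ (Fin 3 → ℝ), n3 ∈ L ∧ n4 ∈ L ∧
      b1 ≤ n3 ∧ a2 ≤ n3 ∧ b3 ≤ n3 ∧ b1 ≤ n4 ∧ b2 ≤ n4 ∧ a3 ≤ n4 := by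
    rcases hres with ⟨h1, h2⟩ | ⟨h1, h2⟩ <;> rcases hres' with ⟨h1', h2'⟩ | ⟨h1', h2'⟩
    · exact absurd (line_unique hPb1 hPa2 (hL r hrL) (hL r' hr'L) nb1a2 hr.2 h1 hr'.2 h1') hrr'
    · exact ⟨r, r', hrL, hr'L, hr.2, h1, h2, hr'.2, h1', h2'⟩
    · exact ⟨r', r, hr'L, hrL, hr'.2, h1', h2', hr.2, h1, h2⟩
    · exact absurd (line_unique hPb1 hPb2 (hL r hrL) (hL r' hr'L) nb1b2 hr.2 h1 hr'.2 h1') hrr'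
  obtain ⟨n3, n4, hn3L, hn4L, hb1n3, ha2n3, hb3n3, hb1n4, hb2n4, ha3n4⟩ := hn34
  -- ======== algebra ========
  obtain ⟨u, hu0, hp0u⟩ := point_rep hPp0
  obtain ⟨v0, hv00, ha1v0⟩ := point_rep hPa1
  obtain ⟨w0, hw00, ha2w0⟩ := point_rep hPa2
  obtain ⟨cb1, hcb10, hb1c⟩ := point_rep hPb1
  obtain ⟨cb2, hcb20, hb2c⟩ := point_rep hPb2
  obtain ⟨c3, hc30, ha3c⟩ := point_rep hPa3
  obtain ⟨cb3, hcb30, hb3c⟩ := point_rep hPb3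
  have memrep : ∀ (q : Submodule ℝ (Fin 3 → ℝ)) (c X Y : V3) (lq : Submodule ℝ (Fin 3 → ℝ)),
      q = span ℝ {c} → q ≤ lq → lq = span ℝ {X, Y} → ∃ st : ℝ × ℝ, st.1 • X + st.2 • Y = c := by
    intro q c X Y lq hq hle hlq
    have : c ∈ span ℝ ({X, Y} : Set V3) := by
      rw [← hlq]
      exact hle (hq ▸ Submodule.mem_span_singleton_self c)
    obtain ⟨s1, t1, h⟩ := Submodule.mem_span_pair.mp this
    exact ⟨(s1, t1), h⟩
  -- normalize v
  have hl1sp : l1 = span ℝ {u, v0} :=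
    line_span (hL l1 hl1L) hp0u ha1v0 hu0 hv00 (Ne.symm d1) hp0l1 ha1l1
  obtain ⟨⟨A1, B1⟩, hAB1⟩ := memrep b1 cb1 u v0 l1 hb1c hb1l1 hl1sp
  have hA1 : A1 ≠ 0 := by
    apply coeff_ne_zero hAB1 hcb10
    rw [← hb1c, ← ha1v0]
    exact fun h => d3 (h ▸ rfl)
  have hB1 : B1 ≠ 0 := by
    apply coeff_ne_zero (show B1 • v0 + A1 • u = cb1 by
      linear_combination (norm := module) hAB1) hcb10
    rw [← hb1c, ← hp0u]
    exact d2
  set v : V3 := (B1 / A1) • v0 with hvdef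
  have hv0 : v ≠ 0 := smul_ne_zero (div_ne_zero hB1 hA1) hv00
  have ha1v : a1 = span ℝ {v} := by rw [ha1v0, hvdef, smul_span' (div_ne_zero hB1 hA1)]
  have hcb1uv : cb1 = A1 • (u + v) := by
    rw [← hAB1, hvdef]
    match_scalars
    · ring
    · field_simp
  have hb1uv : b1 = span ℝ {u + v} := by rw [hb1c, hcb1uv, smul_span' hA1]
  -- normalize w
  have hl2sp : l2 = span ℝ {u, w0} :=
    line_span (hL l2 hl2L) hp0u ha2w0 hu0 hw00 (Ne.symm d4) hp0l2 ha2l2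
  obtain ⟨⟨A2, B2⟩, hAB2⟩ := memrep b2 cb2 u w0 l2 hb2c hb2l2 hl2sp
  have hA2 : A2 ≠ 0 := by
    apply coeff_ne_zero hAB2 hcb20
    rw [← hb2c, ← ha2w0]
    exact fun h => d6 (h ▸ rfl)
  have hB2 : B2 ≠ 0 := by
    apply coeff_ne_zero (show B2 • w0 + A2 • u = cb2 by
      linear_combination (norm := module) hAB2) hcb20
    rw [← hb2c, ← hp0u]
    exact d5
  set w : V3 := (B2 / A2) • w0 with hwdef
  have hw0 : w ≠ 0 := smul_ne_zero (div_ne_zero hB2 hA2) hw00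
  have ha2w : a2 = span ℝ {w} := by rw [ha2w0, hwdef, smul_span' (div_ne_zero hB2 hA2)]
  have hcb2uw : cb2 = A2 • (u + w) := by
    rw [← hAB2, hwdef]
    match_scalars
    · ring
    · field_simp
  have hb2uw : b2 = span ℝ {u + w} := by rw [hb2c, hcb2uw, smul_span' hA2]
  have huvne : u + v ≠ 0 := by
    intro h
    have := hPb1
    rw [hb1uv, h] at this
    have this2 : Module.finrank ℝ (span ℝ ({(0 : V3)} : Set V3)) = 1 := this
    rw [Submodule.span_zero_singleton] at this2
    simp at this2
  have huwne : u + w ≠ 0 := by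
    intro h
    have := hPb2
    rw [hb2uw, h] at this
    have this2 : Module.finrank ℝ (span ℝ ({(0 : V3)} : Set V3)) = 1 := this
    rw [Submodule.span_zero_singleton] at this2
    simp at this2
  -- u, v, w independence
  have huv : span ℝ ({u} : Set V3) ≠ span ℝ {v} := by
    rw [← hp0u, ← ha1v]
    exact fun h => d1 h.symm
  have hl1sp' : l1 = span ℝ {u, v} :=
    line_span (hL l1 hl1L) hp0u ha1v hu0 hv0 (Ne.symm d1) hp0l1 ha1l1
  have hwnot : w ∉ span ℝ ({u, v} : Set V3) := by
    intro h
    have ha2l1 : a2 ≤ l1 := by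
      rw [hl1sp', ha2w]
      exact (span_singleton_le_iff_mem w _).mpr h
    rcases compl1 a2 ha2P ha2l1 with h' | h' | h'
    · exact d4 h'
    · exact na12 h'.symm
    · exact nb1a2 h'.symm
  have hco := indep3 hu0 hv0 huv hwnot
  -- a3 on e = span {v, w}
  have hesp : e = span ℝ {v, w} := line_span (hL e heL) ha1v ha2w hv0 hw0 na12 ha1e ha2e
  obtain ⟨⟨σ, τ⟩, hστ⟩ := memrep a3 c3 v w e ha3c ha3e hesp
  have hσ : σ ≠ 0 := by
    apply coeff_ne_zero hστ hc30
    rw [← ha3c, ← ha2w]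
    exact fun h => na23 h.symm
  have hτ : τ ≠ 0 := by
    apply coeff_ne_zero (show τ • w + σ • v = c3 by linear_combination (norm := module) hστ) hc30
    rw [← ha3c, ← ha1v]
    exact fun h => na13 h.symm
  -- b3 on l3 = span {u, c3}
  have hl3sp : l3 = span ℝ {u, c3} :=
    line_span (hL l3 hl3L) hp0u ha3c hu0 hc30 (Ne.symm d7) hp0l3 ha3l3
  obtain ⟨⟨lam, mu⟩, hlm⟩ := memrep b3 cb3 u c3 l3 hb3c hb3l3 hl3sp
  have hmu : mu ≠ 0 := by
    apply coeff_ne_zero (show mu • c3 + lam • u = cb3 by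
      linear_combination (norm := module) hlm) hcb30
    rw [← hb3c, ← hp0u]
    exact d8
  -- b3 on n2 = span {v, u + w}
  have hn2sp : n2 = span ℝ {v, u + w} :=
    line_span (hL n2 hn2L) ha1v hb2uw hv0 huwne na1b2 ha1n2 hb2n2
  obtain ⟨⟨s2, t2⟩, h2'⟩ := memrep b3 cb3 v (u + w) n2 hb3c hb3n2 hn2sp
  obtain ⟨E1a, E1b, E1c⟩ := hco (lam - t2) (mu * σ - s2) (mu * τ - t2)
    (by linear_combination (norm := module) hlm - h2' + mu • hστ)
  -- b3 on n3 = span {u + v, w}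
  have hn3sp : n3 = span ℝ {u + v, w} :=
    line_span (hL n3 hn3L) hb1uv ha2w huvne hw0 nb1a2 hb1n3 ha2n3
  obtain ⟨⟨f2, g2⟩, h3'⟩ := memrep b3 cb3 (u + v) w n3 hb3c hb3n3 hn3sp
  obtain ⟨E2a, E2b, E2c⟩ := hco (lam - f2) (mu * σ - f2) (mu * τ - g2)
    (by linear_combination (norm := module) hlm - h3' + mu • hστ)
  -- a3 on n4 = span {u + v, u + w}
  have hn4sp : n4 = span ℝ {u + v, u + w} :=
    line_span (hL n4 hn4L) hb1uv hb2uw huvne huwne nb1b2 hb1n4 hb2n4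
  obtain ⟨⟨r2, x2⟩, h4'⟩ := memrep a3 c3 (u + v) (u + w) n4 ha3c ha3n4 hn4sp
  obtain ⟨E3a, E3b, E3c⟩ := hco (r2 + x2) (r2 - σ) (x2 - τ)
    (by linear_combination (norm := module) h4' - hστ)
  -- final contradiction: σ = τ and σ + τ = 0 but σ ≠ 0
  have hστeq : σ = τ := mul_left_cancel₀ hmu (by linear_combination E2b - E2a + E1a - E1c)
  exact hσ (by linear_combination (E3a - E3b - E3c + hστeq) / 2)

set_option maxHeartbeats 1600000 in
lemma chase8core (P L : Finset (Submodule ℝ (Fin 3 → ℝ)))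
    (hP : ∀ p ∈ P, IsProjPoint p) (hL : ∀ l ∈ L, IsProjLine l)
    (hP3 : ∀ p ∈ P, pointDeg L p = 3) (hL3 : ∀ l ∈ L, lineDeg P l = 3)
    {p0 z a1 b1 a2 b2 a3 b3 l1 l2 l3 m1 m2 : Submodule ℝ (Fin 3 → ℝ)}
    (hp0P : p0 ∈ P) (hzP : z ∈ P) (ha1P : a1 ∈ P) (hb1P : b1 ∈ P) (ha2P : a2 ∈ P)
    (hb2P : b2 ∈ P) (ha3P : a3 ∈ P) (hb3P : b3 ∈ P)
    (d1 : a1 ≠ p0) (d2 : b1 ≠ p0) (d3 : a1 ≠ b1)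
    (d4 : a2 ≠ p0) (d5 : b2 ≠ p0) (d6 : a2 ≠ b2)
    (d7 : a3 ≠ p0) (d8 : b3 ≠ p0) (d9 : a3 ≠ b3)
    (dz : z ≠ p0) (dza1 : z ≠ a1) (dzb1 : z ≠ b1) (dza2 : z ≠ a2) (dzb2 : z ≠ b2)
    (dza3 : z ≠ a3) (dzb3 : z ≠ b3)
    (hl1L : l1 ∈ L) (hl2L : l2 ∈ L) (hl3L : l3 ∈ L) (hm1L : m1 ∈ L) (hm2L : m2 ∈ L)
    (h12 : l1 ≠ l2) (h13 : l1 ≠ l3) (h23 : l2 ≠ l3)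
    (hp0l1 : p0 ≤ l1) (ha1l1 : a1 ≤ l1) (hb1l1 : b1 ≤ l1)
    (hp0l2 : p0 ≤ l2) (ha2l2 : a2 ≤ l2) (hb2l2 : b2 ≤ l2)
    (hp0l3 : p0 ≤ l3) (ha3l3 : a3 ≤ l3) (hb3l3 : b3 ≤ l3)
    (hzm1 : z ≤ m1) (ha1m1 : a1 ≤ m1) (ha2m1 : a2 ≤ m1)
    (hzm2 : z ≤ m2) (hb1m2 : b1 ≤ m2) (ha3m2 : a3 ≤ m2)
    (hp0lines : ∀ l ∈ L, p0 ≤ l → l = l1 ∨ l = l2 ∨ l = l3)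
    (hPX : ∀ t ∈ P, t = p0 ∨ t = z ∨ t = a1 ∨ t = b1 ∨ t = a2 ∨ t = b2 ∨ t = a3 ∨ t = b3) :
    False := by
  have hPp0 := hP p0 hp0P; have hPz := hP z hzP
  have hPa1 := hP a1 ha1P; have hPb1 := hP b1 hb1P
  have hPa2 := hP a2 ha2P; have hPb2 := hP b2 hb2P
  have hPa3 := hP a3 ha3P; have hPb3 := hP b3 hb3P
  have cr : ∀ x lx ly : Submodule ℝ (Fin 3 → ℝ),
      x ∈ P → lx ∈ L → ly ∈ L → lx ≠ ly → x ≠ p0 → x ≤ lx → x ≤ ly →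
      p0 ≤ lx → p0 ≤ ly → False := by
    intro x lx ly hx hlx hly hll hxp h1 h2 h3 h4
    exact hll (line_unique (hP x hx) hPp0 (hL lx hlx) (hL ly hly) hxp h1 h3 h2 h4)
  have na12 : a1 ≠ a2 := fun h => cr a1 l1 l2 ha1P hl1L hl2L h12 d1 ha1l1 (h ▸ ha2l2) hp0l1 hp0l2
  have na1b2 : a1 ≠ b2 := fun h => cr a1 l1 l2 ha1P hl1L hl2L h12 d1 ha1l1 (h ▸ hb2l2) hp0l1 hp0l2
  have na13 : a1 ≠ a3 := fun h => cr a1 l1 l3 ha1P hl1L hl3L h13 d1 ha1l1 (h ▸ ha3l3) hp0l1 hp0l3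
  have na1b3 : a1 ≠ b3 := fun h => cr a1 l1 l3 ha1P hl1L hl3L h13 d1 ha1l1 (h ▸ hb3l3) hp0l1 hp0l3
  have nb1a2 : b1 ≠ a2 := fun h => cr b1 l1 l2 hb1P hl1L hl2L h12 d2 hb1l1 (h ▸ ha2l2) hp0l1 hp0l2
  have nb1b2 : b1 ≠ b2 := fun h => cr b1 l1 l2 hb1P hl1L hl2L h12 d2 hb1l1 (h ▸ hb2l2) hp0l1 hp0l2
  have nb1a3 : b1 ≠ a3 := fun h => cr b1 l1 l3 hb1P hl1L hl3L h13 d2 hb1l1 (h ▸ ha3l3) hp0l1 hp0l3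
  have nb1b3 : b1 ≠ b3 := fun h => cr b1 l1 l3 hb1P hl1L hl3L h13 d2 hb1l1 (h ▸ hb3l3) hp0l1 hp0l3
  have na23 : a2 ≠ a3 := fun h => cr a2 l2 l3 ha2P hl2L hl3L h23 d4 ha2l2 (h ▸ ha3l3) hp0l2 hp0l3
  have na2b3 : a2 ≠ b3 := fun h => cr a2 l2 l3 ha2P hl2L hl3L h23 d4 ha2l2 (h ▸ hb3l3) hp0l2 hp0l3
  have nb2a3 : b2 ≠ a3 := fun h => cr b2 l2 l3 hb2P hl2L hl3L h23 d5 hb2l2 (h ▸ ha3l3) hp0l2 hp0l3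
  have nb2b3 : b2 ≠ b3 := fun h => cr b2 l2 l3 hb2P hl2L hl3L h23 d5 hb2l2 (h ▸ hb3l3) hp0l2 hp0l3
  have complOf : ∀ l x y z' : Submodule ℝ (Fin 3 → ℝ), l ∈ L → x ∈ P → y ∈ P → z' ∈ P →
      x ≤ l → y ≤ l → z' ≤ l → x ≠ y → x ≠ z' → y ≠ z' →
      ∀ t ∈ P, t ≤ l → t = x ∨ t = y ∨ t = z' := by
    intro l x y z' hlL hx hy hz hxl hyl hzl hxy hxz hyz t ht htl
    exact card3_complete (hL3 l hlL) (Finset.mem_filter.mpr ⟨hx, hxl⟩)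
      (Finset.mem_filter.mpr ⟨hy, hyl⟩) (Finset.mem_filter.mpr ⟨hz, hzl⟩)
      hxy hxz hyz t (Finset.mem_filter.mpr ⟨ht, htl⟩)
  have compl1 := complOf l1 p0 a1 b1 hl1L hp0P ha1P hb1P hp0l1 ha1l1 hb1l1
    (Ne.symm d1) (Ne.symm d2) d3
  have compl2 := complOf l2 p0 a2 b2 hl2L hp0P ha2P hb2P hp0l2 ha2l2 hb2l2
    (Ne.symm d4) (Ne.symm d5) d6
  have compl3 := complOf l3 p0 a3 b3 hl3L hp0P ha3P hb3P hp0l3 ha3l3 hb3l3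
    (Ne.symm d7) (Ne.symm d8) d9
  have complm1 := complOf m1 z a1 a2 hm1L hzP ha1P ha2P hzm1 ha1m1 ha2m1 dza1 dza2 na12
  have complm2 := complOf m2 z b1 a3 hm2L hzP hb1P ha3P hzm2 hb1m2 ha3m2 dzb1 dza3 nb1a3
  have hznl1 : ¬ z ≤ l1 := by
    intro h
    rcases compl1 z hzP h with h' | h' | h'
    exacts [dz h', dza1 h', dzb1 h']
  have hznl2 : ¬ z ≤ l2 := by
    intro h
    rcases compl2 z hzP h with h' | h' | h'
    exacts [dz h', dza2 h', dzb2 h']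
  have hznl3 : ¬ z ≤ l3 := by
    intro h
    rcases compl3 z hzP h with h' | h' | h'
    exacts [dz h', dza3 h', dzb3 h']
  have hnp0m1 : ¬ p0 ≤ m1 := by
    intro h
    rcases hp0lines m1 hm1L h with h' | h' | h' <;> rw [h'] at hzm1
    exacts [hznl1 hzm1, hznl2 hzm1, hznl3 hzm1]
  have hnp0m2 : ¬ p0 ≤ m2 := by
    intro h
    rcases hp0lines m2 hm2L h with h' | h' | h' <;> rw [h'] at hzm2
    exacts [hznl1 hzm2, hznl2 hzm2, hznl3 hzm2]
  have hm12 : m1 ≠ m2 := by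
    intro h
    rcases complm2 a1 ha1P (h ▸ ha1m1) with h' | h' | h'
    exacts [dza1 h'.symm, d3 h', na13 h']
  -- third line m3 through z
  obtain ⟨m3, hm3f, hm3m1, hm3m2⟩ := exists_third
    (le_of_eq (hP3 z hzP).symm)
    (Finset.mem_filter.mpr ⟨hm1L, hzm1⟩) (Finset.mem_filter.mpr ⟨hm2L, hzm2⟩)
  have hm3L : m3 ∈ L := (Finset.mem_filter.mp hm3f).1
  have hzm3 : z ≤ m3 := (Finset.mem_filter.mp hm3f).2
  have hclm3 : ∀ t : Submodule ℝ (Fin 3 → ℝ), t ∈ P → t ≤ m3 → t ≠ z → t = b2 ∨ t = b3 := by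
    intro t htP htm3 htz
    rcases hPX t htP with h | h | h | h | h | h | h | h <;> rw [h] at htm3 ⊢
    · exfalso
      rcases hp0lines m3 hm3L htm3 with h' | h' | h' <;> rw [h'] at hzm3
      exacts [hznl1 hzm3, hznl2 hzm3, hznl3 hzm3]
    · exact absurd rfl (h ▸ htz)
    · exact absurd (line_unique hPz hPa1 (hL m1 hm1L) (hL m3 hm3L) dza1 hzm1 ha1m1 hzm3 htm3)
        (Ne.symm hm3m1)
    · exact absurd (line_unique hPz hPb1 (hL m2 hm2L) (hL m3 hm3L) dzb1 hzm2 hb1m2 hzm3 htm3)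
        (Ne.symm hm3m2)
    · exact absurd (line_unique hPz hPa2 (hL m1 hm1L) (hL m3 hm3L) dza2 hzm1 ha2m1 hzm3 htm3)
        (Ne.symm hm3m1)
    · exact Or.inl rfl
    · exact absurd (line_unique hPz hPa3 (hL m2 hm2L) (hL m3 hm3L) dza3 hzm2 ha3m2 hzm3 htm3)
        (Ne.symm hm3m2)
    · exact Or.inr rfl
  obtain ⟨y, y', hy, hy', hyz1, hy'z1, hyy'⟩ := card3_extract (hL3 m3 hm3L)
    (Finset.mem_filter.mpr ⟨hzP, hzm3⟩)
  rw [Finset.mem_filter] at hy hy'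
  have hyne : y ≠ z := fun h => hyz1 (by rw [h])
  have hy'ne : y' ≠ z := fun h => hy'z1 (by rw [h])
  have hb23m3 : b2 ≤ m3 ∧ b3 ≤ m3 := by
    rcases hclm3 y hy.1 hy.2 hyne with h | h <;>
      rcases hclm3 y' hy'.1 hy'.2 hy'ne with h' | h'
    · exact absurd (h ▸ h' ▸ rfl : y = y') hyy'
    · exact ⟨h ▸ hy.2, h' ▸ hy'.2⟩
    · exact ⟨h' ▸ hy'.2, h ▸ hy.2⟩
    · exact absurd (h ▸ h' ▸ rfl : y = y') hyy'
  obtain ⟨hb2m3, hb3m3⟩ := hb23m3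
  have complm3 := complOf m3 z b2 b3 hm3L hzP hb2P hb3P hzm3 hb2m3 hb3m3 dzb2 dzb3 nb2b3
  have hzlines : ∀ l ∈ L, z ≤ l → l = m1 ∨ l = m2 ∨ l = m3 := by
    intro l hl hzl
    exact card3_complete (hP3 z hzP) (Finset.mem_filter.mpr ⟨hm1L, hzm1⟩)
      (Finset.mem_filter.mpr ⟨hm2L, hzm2⟩) (Finset.mem_filter.mpr ⟨hm3L, hzm3⟩)
      hm12 (Ne.symm hm3m1) (Ne.symm hm3m2) l (Finset.mem_filter.mpr ⟨hl, hzl⟩)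
  have hl1m1 : l1 ≠ m1 := fun h => hnp0m1 (h ▸ hp0l1)
  have hl1m2 : l1 ≠ m2 := fun h => hnp0m2 (h ▸ hp0l1)
  -- third line n1 through a1
  obtain ⟨n1, hn1f, hn1l1, hn1m1⟩ := exists_third
    (le_of_eq (hP3 a1 ha1P).symm)
    (Finset.mem_filter.mpr ⟨hl1L, ha1l1⟩) (Finset.mem_filter.mpr ⟨hm1L, ha1m1⟩)
  have hn1L : n1 ∈ L := (Finset.mem_filter.mp hn1f).1
  have ha1n1 : a1 ≤ n1 := (Finset.mem_filter.mp hn1f).2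
  have hcln1 : ∀ t : Submodule ℝ (Fin 3 → ℝ), t ∈ P → t ≤ n1 → t ≠ a1 →
      t = b2 ∨ t = a3 ∨ t = b3 := by
    intro t htP htn1 hta1
    rcases hPX t htP with h | h | h | h | h | h | h | h <;> rw [h] at htn1 ⊢
    · exfalso
      rcases hp0lines n1 hn1L htn1 with h' | h' | h'
      · exact hn1l1 h'
      · rw [h'] at ha1n1
        rcases compl2 a1 ha1P ha1n1 with h'' | h'' | h''
        exacts [d1 h'', na12 h'', na1b2 h'']
      · rw [h'] at ha1n1
        rcases compl3 a1 ha1P ha1n1 with h'' | h'' | h''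
        exacts [d1 h'', na13 h'', na1b3 h'']
    · exfalso
      rcases hzlines n1 hn1L htn1 with h' | h' | h'
      · exact hn1m1 h'
      · rw [h'] at ha1n1
        rcases complm2 a1 ha1P ha1n1 with h'' | h'' | h''
        exacts [dza1 h''.symm, d3 h'', na13 h'']
      · rw [h'] at ha1n1
        rcases complm3 a1 ha1P ha1n1 with h'' | h'' | h''
        exacts [dza1 h''.symm, na1b2 h'', na1b3 h'']
    · exact absurd rfl (h ▸ hta1)
    · exact absurd (line_unique hPa1 hPb1 (hL l1 hl1L) (hL n1 hn1L) d3 ha1l1 hb1l1 ha1n1 htn1)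
        (Ne.symm hn1l1)
    · exact absurd (line_unique hPa1 hPa2 (hL m1 hm1L) (hL n1 hn1L) na12 ha1m1 ha2m1 ha1n1 htn1)
        (Ne.symm hn1m1)
    · exact Or.inl rfl
    · exact Or.inr (Or.inl rfl)
    · exact Or.inr (Or.inr rfl)
  obtain ⟨t1, t1', ht1, ht1', ht1a, ht1'a, ht11'⟩ := card3_extract (hL3 n1 hn1L)
    (Finset.mem_filter.mpr ⟨ha1P, ha1n1⟩)
  rw [Finset.mem_filter] at ht1 ht1'
  have ht1ne : t1 ≠ a1 := fun h => ht1a (by rw [h])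
  have ht1'ne : t1' ≠ a1 := fun h => ht1'a (by rw [h])
  have hpairn1 : ∀ s s' : Submodule ℝ (Fin 3 → ℝ), s ≤ n1 → s' ≤ n1 →
      (s = b2 ∧ s' = a3) ∨ (s = a3 ∧ s' = b3) ∨ (s = b2 ∧ s' = b3) →
      b2 ≤ n1 ∧ a3 ≤ n1 := by
    intro s s' hsn hs'n hor
    rcases hor with ⟨h1, h2⟩ | ⟨h1, h2⟩ | ⟨h1, h2⟩ <;> rw [h1] at hsn <;> rw [h2] at hs'n
    · exact ⟨hsn, hs'n⟩
    · exfalso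
      have := line_unique hPa3 hPb3 (hL n1 hn1L) (hL l3 hl3L) d9 hsn hs'n ha3l3 hb3l3
      rw [this] at ha1n1
      rcases compl3 a1 ha1P ha1n1 with h'' | h'' | h''
      exacts [d1 h'', na13 h'', na1b3 h'']
    · exfalso
      have := line_unique hPb2 hPb3 (hL n1 hn1L) (hL m3 hm3L) nb2b3 hsn hs'n hb2m3 hb3m3
      rw [this] at ha1n1
      rcases complm3 a1 ha1P ha1n1 with h'' | h'' | h''
      exacts [dza1 h''.symm, na1b2 h'', na1b3 h'']
  have hb2a3n1 : b2 ≤ n1 ∧ a3 ≤ n1 := by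
    rcases hcln1 t1 ht1.1 ht1.2 ht1ne with h | h | h <;>
      rcases hcln1 t1' ht1'.1 ht1'.2 ht1'ne with h' | h' | h'
    · exact absurd (h ▸ h' ▸ rfl : t1 = t1') ht11'
    · exact hpairn1 t1 t1' ht1.2 ht1'.2 (Or.inl ⟨h, h'⟩)
    · exact hpairn1 t1 t1' ht1.2 ht1'.2 (Or.inr (Or.inr ⟨h, h'⟩))
    · exact hpairn1 t1' t1 ht1'.2 ht1.2 (Or.inl ⟨h', h⟩)
    · exact absurd (h ▸ h' ▸ rfl : t1 = t1') ht11'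
    · exact hpairn1 t1 t1' ht1.2 ht1'.2 (Or.inr (Or.inl ⟨h, h'⟩))
    · exact hpairn1 t1' t1 ht1'.2 ht1.2 (Or.inr (Or.inr ⟨h', h⟩))
    · exact hpairn1 t1' t1 ht1'.2 ht1.2 (Or.inr (Or.inl ⟨h', h⟩))
    · exact absurd (h ▸ h' ▸ rfl : t1 = t1') ht11'
  obtain ⟨hb2n1, ha3n1⟩ := hb2a3n1
  -- third line n2 through b1
  obtain ⟨n2, hn2f, hn2l1, hn2m2⟩ := exists_third
    (le_of_eq (hP3 b1 hb1P).symm)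
    (Finset.mem_filter.mpr ⟨hl1L, hb1l1⟩) (Finset.mem_filter.mpr ⟨hm2L, hb1m2⟩)
  have hn2L : n2 ∈ L := (Finset.mem_filter.mp hn2f).1
  have hb1n2 : b1 ≤ n2 := (Finset.mem_filter.mp hn2f).2
  have hcln2 : ∀ t : Submodule ℝ (Fin 3 → ℝ), t ∈ P → t ≤ n2 → t ≠ b1 →
      t = a2 ∨ t = b2 ∨ t = b3 := by
    intro t htP htn2 htb1
    rcases hPX t htP with h | h | h | h | h | h | h | h <;> rw [h] at htn2 ⊢
    · exfalso
      rcases hp0lines n2 hn2L htn2 with h' | h' | h'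
      · exact hn2l1 h'
      · rw [h'] at hb1n2
        rcases compl2 b1 hb1P hb1n2 with h'' | h'' | h''
        exacts [d2 h'', nb1a2 h'', nb1b2 h'']
      · rw [h'] at hb1n2
        rcases compl3 b1 hb1P hb1n2 with h'' | h'' | h''
        exacts [d2 h'', nb1a3 h'', nb1b3 h'']
    · exfalso
      rcases hzlines n2 hn2L htn2 with h' | h' | h'
      · rw [h'] at hb1n2
        rcases complm1 b1 hb1P hb1n2 with h'' | h'' | h''
        exacts [dzb1 h''.symm, d3 h''.symm, nb1a2 h'']
      · exact hn2m2 h'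
      · rw [h'] at hb1n2
        rcases complm3 b1 hb1P hb1n2 with h'' | h'' | h''
        exacts [dzb1 h''.symm, nb1b2 h'', nb1b3 h'']
    · exact absurd (line_unique hPa1 hPb1 (hL l1 hl1L) (hL n2 hn2L) d3 ha1l1 hb1l1 htn2 hb1n2)
        (Ne.symm hn2l1)
    · exact absurd rfl (h ▸ htb1)
    · exact Or.inl rfl
    · exact Or.inr (Or.inl rfl)
    · exact absurd (line_unique hPb1 hPa3 (hL m2 hm2L) (hL n2 hn2L) nb1a3 hb1m2 ha3m2 hb1n2 htn2)
        (Ne.symm hn2m2)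
    · exact Or.inr (Or.inr rfl)
  obtain ⟨t2, t2', ht2, ht2', ht2b, ht2'b, ht22'⟩ := card3_extract (hL3 n2 hn2L)
    (Finset.mem_filter.mpr ⟨hb1P, hb1n2⟩)
  rw [Finset.mem_filter] at ht2 ht2'
  have ht2ne : t2 ≠ b1 := fun h => ht2b (by rw [h])
  have ht2'ne : t2' ≠ b1 := fun h => ht2'b (by rw [h])
  have hpairn2 : ∀ s s' : Submodule ℝ (Fin 3 → ℝ), s ≤ n2 → s' ≤ n2 →
      (s = a2 ∧ s' = b2) ∨ (s = a2 ∧ s' = b3) ∨ (s = b2 ∧ s' = b3) →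
      a2 ≤ n2 ∧ b3 ≤ n2 := by
    intro s s' hsn hs'n hor
    rcases hor with ⟨h1, h2⟩ | ⟨h1, h2⟩ | ⟨h1, h2⟩ <;> rw [h1] at hsn <;> rw [h2] at hs'n
    · exfalso
      have := line_unique hPa2 hPb2 (hL n2 hn2L) (hL l2 hl2L) d6 hsn hs'n ha2l2 hb2l2
      rw [this] at hb1n2
      rcases compl2 b1 hb1P hb1n2 with h'' | h'' | h''
      exacts [d2 h'', nb1a2 h'', nb1b2 h'']
    · exact ⟨hsn, hs'n⟩
    · exfalso
      have := line_unique hPb2 hPb3 (hL n2 hn2L) (hL m3 hm3L) nb2b3 hsn hs'n hb2m3 hb3m3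
      rw [this] at hb1n2
      rcases complm3 b1 hb1P hb1n2 with h'' | h'' | h''
      exacts [dzb1 h''.symm, nb1b2 h'', nb1b3 h'']
  have ha2b3n2 : a2 ≤ n2 ∧ b3 ≤ n2 := by
    rcases hcln2 t2 ht2.1 ht2.2 ht2ne with h | h | h <;>
      rcases hcln2 t2' ht2'.1 ht2'.2 ht2'ne with h' | h' | h'
    · exact absurd (h ▸ h' ▸ rfl : t2 = t2') ht22'
    · exact hpairn2 t2 t2' ht2.2 ht2'.2 (Or.inl ⟨h, h'⟩)
    · exact hpairn2 t2 t2' ht2.2 ht2'.2 (Or.inr (Or.inl ⟨h, h'⟩))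
    · exact hpairn2 t2' t2 ht2'.2 ht2.2 (Or.inl ⟨h', h⟩)
    · exact absurd (h ▸ h' ▸ rfl : t2 = t2') ht22'
    · exact hpairn2 t2 t2' ht2.2 ht2'.2 (Or.inr (Or.inr ⟨h, h'⟩))
    · exact hpairn2 t2' t2 ht2'.2 ht2.2 (Or.inr (Or.inl ⟨h', h⟩))
    · exact hpairn2 t2' t2 ht2'.2 ht2.2 (Or.inr (Or.inr ⟨h', h⟩))
    · exact absurd (h ▸ h' ▸ rfl : t2 = t2') ht22'
  obtain ⟨ha2n2, hb3n2⟩ := ha2b3n2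
  -- ======== algebra ========
  obtain ⟨u, hu0, hp0u⟩ := point_rep hPp0
  obtain ⟨v0, hv00, ha1v0⟩ := point_rep hPa1
  obtain ⟨w0, hw00, ha2w0⟩ := point_rep hPa2
  obtain ⟨cb1, hcb10, hb1c⟩ := point_rep hPb1
  obtain ⟨cb2, hcb20, hb2c⟩ := point_rep hPb2
  obtain ⟨cz, hcz0, hzc⟩ := point_rep hPz
  obtain ⟨ca3, hca30, ha3c⟩ := point_rep hPa3
  obtain ⟨cb3, hcb30, hb3c⟩ := point_rep hPb3
  have memrep : ∀ (q : Submodule ℝ (Fin 3 → ℝ)) (c X Y : V3) (lq : Submodule ℝ (Fin 3 → ℝ)),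
      q = span ℝ {c} → q ≤ lq → lq = span ℝ {X, Y} → ∃ st : ℝ × ℝ, st.1 • X + st.2 • Y = c := by
    intro q c X Y lq hq hle hlq
    have : c ∈ span ℝ ({X, Y} : Set V3) := by
      rw [← hlq]
      exact hle (hq ▸ Submodule.mem_span_singleton_self c)
    obtain ⟨s1, t1, h⟩ := Submodule.mem_span_pair.mp this
    exact ⟨(s1, t1), h⟩
  have hl1sp : l1 = span ℝ {u, v0} :=
    line_span (hL l1 hl1L) hp0u ha1v0 hu0 hv00 (Ne.symm d1) hp0l1 ha1l1
  obtain ⟨⟨A1, B1⟩, hAB1⟩ := memrep b1 cb1 u v0 l1 hb1c hb1l1 hl1sp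
  have hA1 : A1 ≠ 0 := by
    apply coeff_ne_zero hAB1 hcb10
    rw [← hb1c, ← ha1v0]
    exact fun h => d3 (h ▸ rfl)
  have hB1 : B1 ≠ 0 := by
    apply coeff_ne_zero (show B1 • v0 + A1 • u = cb1 by
      linear_combination (norm := module) hAB1) hcb10
    rw [← hb1c, ← hp0u]
    exact d2
  set v : V3 := (B1 / A1) • v0 with hvdef
  have hv0 : v ≠ 0 := smul_ne_zero (div_ne_zero hB1 hA1) hv00
  have ha1v : a1 = span ℝ {v} := by rw [ha1v0, hvdef, smul_span' (div_ne_zero hB1 hA1)]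
  have hcb1uv : cb1 = A1 • (u + v) := by
    rw [← hAB1, hvdef]
    match_scalars
    · ring
    · field_simp
  have hb1uv : b1 = span ℝ {u + v} := by rw [hb1c, hcb1uv, smul_span' hA1]
  have hl2sp : l2 = span ℝ {u, w0} :=
    line_span (hL l2 hl2L) hp0u ha2w0 hu0 hw00 (Ne.symm d4) hp0l2 ha2l2
  obtain ⟨⟨A2, B2⟩, hAB2⟩ := memrep b2 cb2 u w0 l2 hb2c hb2l2 hl2sp
  have hA2 : A2 ≠ 0 := by
    apply coeff_ne_zero hAB2 hcb20
    rw [← hb2c, ← ha2w0]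
    exact fun h => d6 (h ▸ rfl)
  have hB2 : B2 ≠ 0 := by
    apply coeff_ne_zero (show B2 • w0 + A2 • u = cb2 by
      linear_combination (norm := module) hAB2) hcb20
    rw [← hb2c, ← hp0u]
    exact d5
  set w : V3 := (B2 / A2) • w0 with hwdef
  have hw0 : w ≠ 0 := smul_ne_zero (div_ne_zero hB2 hA2) hw00
  have ha2w : a2 = span ℝ {w} := by rw [ha2w0, hwdef, smul_span' (div_ne_zero hB2 hA2)]
  have hcb2uw : cb2 = A2 • (u + w) := by
    rw [← hAB2, hwdef]
    match_scalars
    · ring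
    · field_simp
  have hb2uw : b2 = span ℝ {u + w} := by rw [hb2c, hcb2uw, smul_span' hA2]
  have huvne : u + v ≠ 0 := by
    intro h
    have hh := hPb1
    rw [hb1uv, h] at hh
    have hh2 : Module.finrank ℝ (span ℝ ({(0 : V3)} : Set V3)) = 1 := hh
    rw [Submodule.span_zero_singleton] at hh2
    simp at hh2
  have huwne : u + w ≠ 0 := by
    intro h
    have hh := hPb2
    rw [hb2uw, h] at hh
    have hh2 : Module.finrank ℝ (span ℝ ({(0 : V3)} : Set V3)) = 1 := hh
    rw [Submodule.span_zero_singleton] at hh2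
    simp at hh2
  have huv : span ℝ ({u} : Set V3) ≠ span ℝ {v} := by
    rw [← hp0u, ← ha1v]
    exact fun h => d1 h.symm
  have hl1sp' : l1 = span ℝ {u, v} :=
    line_span (hL l1 hl1L) hp0u ha1v hu0 hv0 (Ne.symm d1) hp0l1 ha1l1
  have hwnot : w ∉ span ℝ ({u, v} : Set V3) := by
    intro h
    have ha2l1 : a2 ≤ l1 := by
      rw [hl1sp', ha2w]
      exact (span_singleton_le_iff_mem w _).mpr h
    rcases compl1 a2 ha2P ha2l1 with h' | h' | h'
    exacts [d4 h', na12 h'.symm, nb1a2 h'.symm]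
  have hco := indep3 hu0 hv0 huv hwnot
  -- z on m1 = span {v, w}
  have hm1sp : m1 = span ℝ {v, w} := line_span (hL m1 hm1L) ha1v ha2w hv0 hw0 na12 ha1m1 ha2m1
  obtain ⟨⟨al, be⟩, hzvw⟩ := memrep z cz v w m1 hzc hzm1 hm1sp
  have hal : al ≠ 0 := by
    apply coeff_ne_zero hzvw hcz0
    rw [← hzc, ← ha2w]
    exact dza2
  have hbe : be ≠ 0 := by
    apply coeff_ne_zero (show be • w + al • v = cz by
      linear_combination (norm := module) hzvw) hcz0
    rw [← hzc, ← ha1v]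
    exact dza1
  -- a3 on m2 = span {cz, u + v}
  have hm2sp : m2 = span ℝ {cz, u + v} :=
    line_span (hL m2 hm2L) hzc hb1uv hcz0 huvne dzb1 hzm2 hb1m2
  obtain ⟨⟨x, y⟩, ha3m2c⟩ := memrep a3 ca3 cz (u + v) m2 ha3c ha3m2 hm2sp
  have hy : y ≠ 0 := by
    apply coeff_ne_zero (show y • (u + v) + x • cz = ca3 by
      linear_combination (norm := module) ha3m2c) hca30
    rw [← ha3c, ← hzc]
    exact fun h => dza3 h.symm
  -- b3 on m3 = span {cz, u + w}
  have hm3sp : m3 = span ℝ {cz, u + w} :=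
    line_span (hL m3 hm3L) hzc hb2uw hcz0 huwne dzb2 hzm3 hb2m3
  obtain ⟨⟨p, q⟩, hb3m3c⟩ := memrep b3 cb3 cz (u + w) m3 hb3c hb3m3 hm3sp
  have hq : q ≠ 0 := by
    apply coeff_ne_zero (show q • (u + w) + p • cz = cb3 by
      linear_combination (norm := module) hb3m3c) hcb30
    rw [← hb3c, ← hzc]
    exact fun h => dzb3 h.symm
  -- a3 on n1 = span {v, u + w}
  have hn1sp : n1 = span ℝ {v, u + w} :=
    line_span (hL n1 hn1L) ha1v hb2uw hv0 huwne na1b2 ha1n1 hb2n1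
  obtain ⟨⟨sg, ta⟩, hn1c⟩ := memrep a3 ca3 v (u + w) n1 ha3c ha3n1 hn1sp
  obtain ⟨E1a, E1b, E1c⟩ := hco (y - ta) (x * al + y - sg) (x * be - ta)
    (by linear_combination (norm := module) x • hzvw + ha3m2c - hn1c)
  -- b3 on n2 = span {u + v, w}
  have hn2sp : n2 = span ℝ {u + v, w} :=
    line_span (hL n2 hn2L) hb1uv ha2w huvne hw0 nb1a2 hb1n2 ha2n2
  obtain ⟨⟨ph, ps⟩, hn2c⟩ := memrep b3 cb3 (u + v) w n2 hb3c hb3n2 hn2sp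
  obtain ⟨E2a, E2b, E2c⟩ := hco (q - ph) (p * al - ph) (p * be + q - ps)
    (by linear_combination (norm := module) p • hzvw + hb3m3c - hn2c)
  -- b3 on l3 = span {u, ca3}
  have hl3sp : l3 = span ℝ {u, ca3} :=
    line_span (hL l3 hl3L) hp0u ha3c hu0 hca30 (Ne.symm d7) hp0l3 ha3l3
  obtain ⟨⟨lam, mu⟩, hl3c⟩ := memrep b3 cb3 u ca3 l3 hb3c hb3l3 hl3sp
  obtain ⟨E3a, E3b, E3c⟩ := hco (q - lam - mu * y) (p * al - mu * (x * al) - mu * y)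
    (p * be + q - mu * (x * be))
    (by linear_combination (norm := module) hb3m3c + (p - mu * x) • hzvw - hl3c - mu • ha3m2c)
  -- final contradiction
  have hpq : q = p * al := by linear_combination E2a - E2b
  have hp0' : p ≠ 0 := by
    intro h
    rw [h, zero_mul] at hpq
    exact hq hpq
  have hkey : p * al ^ 2 + p * al * be + p * be ^ 2 = 0 := by
    linear_combination (al + be) * E3c - (al + be) * E2a + (al + be) * E2b - be * E3b -
      (be * mu) * E1a + (be * mu) * E1c
  have hfact : p * (al ^ 2 + al * be + be ^ 2) = 0 := by linear_combination hkey
  rcases mul_eq_zero.mp hfact with h | h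
  · exact hp0' h
  · exact no_eisenstein hbe h

set_option maxHeartbeats 1600000 in
lemma chase8 (P L : Finset (Submodule ℝ (Fin 3 → ℝ)))
    (hP : ∀ p ∈ P, IsProjPoint p) (hL : ∀ l ∈ L, IsProjLine l)
    (hP3 : ∀ p ∈ P, pointDeg L p = 3) (hL3 : ∀ l ∈ L, lineDeg P l = 3)
    {p0 z a1 b1 a2 b2 a3 b3 l1 l2 l3 m1 : Submodule ℝ (Fin 3 → ℝ)}
    (hp0P : p0 ∈ P) (hzP : z ∈ P) (ha1P : a1 ∈ P) (hb1P : b1 ∈ P) (ha2P : a2 ∈ P)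
    (hb2P : b2 ∈ P) (ha3P : a3 ∈ P) (hb3P : b3 ∈ P)
    (d1 : a1 ≠ p0) (d2 : b1 ≠ p0) (d3 : a1 ≠ b1)
    (d4 : a2 ≠ p0) (d5 : b2 ≠ p0) (d6 : a2 ≠ b2)
    (d7 : a3 ≠ p0) (d8 : b3 ≠ p0) (d9 : a3 ≠ b3)
    (dz : z ≠ p0) (dza1 : z ≠ a1) (dzb1 : z ≠ b1) (dza2 : z ≠ a2) (dzb2 : z ≠ b2)
    (dza3 : z ≠ a3) (dzb3 : z ≠ b3)
    (hl1L : l1 ∈ L) (hl2L : l2 ∈ L) (hl3L : l3 ∈ L) (hm1L : m1 ∈ L)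
    (h12 : l1 ≠ l2) (h13 : l1 ≠ l3) (h23 : l2 ≠ l3)
    (hp0l1 : p0 ≤ l1) (ha1l1 : a1 ≤ l1) (hb1l1 : b1 ≤ l1)
    (hp0l2 : p0 ≤ l2) (ha2l2 : a2 ≤ l2) (hb2l2 : b2 ≤ l2)
    (hp0l3 : p0 ≤ l3) (ha3l3 : a3 ≤ l3) (hb3l3 : b3 ≤ l3)
    (hzm1 : z ≤ m1) (ha1m1 : a1 ≤ m1) (ha2m1 : a2 ≤ m1)
    (hp0lines : ∀ l ∈ L, p0 ≤ l → l = l1 ∨ l = l2 ∨ l = l3)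
    (hPX : ∀ t ∈ P, t = p0 ∨ t = z ∨ t = a1 ∨ t = b1 ∨ t = a2 ∨ t = b2 ∨ t = a3 ∨ t = b3)
    (hzB : ∀ q ∈ P, q ≠ z → q ≠ p0 → ∃ l ∈ L, z ≤ l ∧ q ≤ l) :
    False := by
  have hPp0 := hP p0 hp0P; have hPz := hP z hzP
  have hPa1 := hP a1 ha1P; have hPb1 := hP b1 hb1P
  have hPa2 := hP a2 ha2P; have hPb2 := hP b2 hb2P
  have hPa3 := hP a3 ha3P; have hPb3 := hP b3 hb3P
  have complOf : ∀ l x y z' : Submodule ℝ (Fin 3 → ℝ), l ∈ L → x ∈ P → y ∈ P → z' ∈ P →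
      x ≤ l → y ≤ l → z' ≤ l → x ≠ y → x ≠ z' → y ≠ z' →
      ∀ t ∈ P, t ≤ l → t = x ∨ t = y ∨ t = z' := by
    intro l x y z' hlL hx hy hz hxl hyl hzl hxy hxz hyz t ht htl
    exact card3_complete (hL3 l hlL) (Finset.mem_filter.mpr ⟨hx, hxl⟩)
      (Finset.mem_filter.mpr ⟨hy, hyl⟩) (Finset.mem_filter.mpr ⟨hz, hzl⟩)
      hxy hxz hyz t (Finset.mem_filter.mpr ⟨ht, htl⟩)
  have cr : ∀ x lx ly : Submodule ℝ (Fin 3 → ℝ),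
      x ∈ P → lx ∈ L → ly ∈ L → lx ≠ ly → x ≠ p0 → x ≤ lx → x ≤ ly →
      p0 ≤ lx → p0 ≤ ly → False := by
    intro x lx ly hx hlx hly hll hxp h1 h2 h3 h4
    exact hll (line_unique (hP x hx) hPp0 (hL lx hlx) (hL ly hly) hxp h1 h3 h2 h4)
  have na12 : a1 ≠ a2 := fun h => cr a1 l1 l2 ha1P hl1L hl2L h12 d1 ha1l1 (h ▸ ha2l2) hp0l1 hp0l2
  have nb1a2 : b1 ≠ a2 := fun h => cr b1 l1 l2 hb1P hl1L hl2L h12 d2 hb1l1 (h ▸ ha2l2) hp0l1 hp0l2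
  have na13 : a1 ≠ a3 := fun h => cr a1 l1 l3 ha1P hl1L hl3L h13 d1 ha1l1 (h ▸ ha3l3) hp0l1 hp0l3
  have na23 : a2 ≠ a3 := fun h => cr a2 l2 l3 ha2P hl2L hl3L h23 d4 ha2l2 (h ▸ ha3l3) hp0l2 hp0l3
  have nb1a3 : b1 ≠ a3 := fun h => cr b1 l1 l3 hb1P hl1L hl3L h13 d2 hb1l1 (h ▸ ha3l3) hp0l1 hp0l3
  have nb2a3 : b2 ≠ a3 := fun h => cr b2 l2 l3 hb2P hl2L hl3L h23 d5 hb2l2 (h ▸ ha3l3) hp0l2 hp0l3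
  have compl1 := complOf l1 p0 a1 b1 hl1L hp0P ha1P hb1P hp0l1 ha1l1 hb1l1
    (Ne.symm d1) (Ne.symm d2) d3
  have compl2 := complOf l2 p0 a2 b2 hl2L hp0P ha2P hb2P hp0l2 ha2l2 hb2l2
    (Ne.symm d4) (Ne.symm d5) d6
  have compl3 := complOf l3 p0 a3 b3 hl3L hp0P ha3P hb3P hp0l3 ha3l3 hb3l3
    (Ne.symm d7) (Ne.symm d8) d9
  have complm1 := complOf m1 z a1 a2 hm1L hzP ha1P ha2P hzm1 ha1m1 ha2m1 dza1 dza2 na12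
  have hznl1 : ¬ z ≤ l1 := by
    intro h
    rcases compl1 z hzP h with h' | h' | h'
    exacts [dz h', dza1 h', dzb1 h']
  have hznl2 : ¬ z ≤ l2 := by
    intro h
    rcases compl2 z hzP h with h' | h' | h'
    exacts [dz h', dza2 h', dzb2 h']
  have hznl3 : ¬ z ≤ l3 := by
    intro h
    rcases compl3 z hzP h with h' | h' | h'
    exacts [dz h', dza3 h', dzb3 h']
  -- the line m2 through z and b1
  obtain ⟨m2, hm2L, hzm2, hb1m2⟩ := hzB b1 hb1P (Ne.symm dzb1) d2
  have hm2m1 : m2 ≠ m1 := by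
    intro h
    rcases complm1 b1 hb1P (h ▸ hb1m2) with h' | h' | h'
    exacts [dzb1 h'.symm, d3 h'.symm, nb1a2 h']
  -- third point of m2
  obtain ⟨t, ht, htz, htb1⟩ := exists_third (le_of_eq (hL3 m2 hm2L).symm)
    (Finset.mem_filter.mpr ⟨hzP, hzm2⟩) (Finset.mem_filter.mpr ⟨hb1P, hb1m2⟩)
  rw [Finset.mem_filter] at ht
  have htP : t ∈ P := ht.1
  have htm2 : t ≤ m2 := ht.2
  have hnp0m2 : ¬ p0 ≤ m2 := by
    intro h
    rcases hp0lines m2 hm2L h with h' | h' | h' <;> rw [h'] at hzm2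
    exacts [hznl1 hzm2, hznl2 hzm2, hznl3 hzm2]
  rcases hPX t htP with h | h | h | h | h | h | h | h <;> rw [h] at htm2 htz htb1
  · exact hnp0m2 htm2
  · exact htz rfl
  · exact hm2m1 (line_unique hPz hPa1 (hL m2 hm2L) (hL m1 hm1L) dza1 hzm2 htm2 hzm1 ha1m1)
  · exact htb1 rfl
  · exact hm2m1 (line_unique hPz hPa2 (hL m2 hm2L) (hL m1 hm1L) dza2 hzm2 htm2 hzm1 ha2m1)
  · -- t = b2 : impossible
    have nb1b2 : b1 ≠ b2 := fun hh =>
      cr b1 l1 l2 hb1P hl1L hl2L h12 d2 hb1l1 (hh ▸ hb2l2) hp0l1 hp0l2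
    have complm2' := complOf m2 z b1 b2 hm2L hzP hb1P hb2P hzm2 hb1m2 htm2 dzb1 dzb2 nb1b2
    obtain ⟨m3, hm3L, hzm3, ha3m3⟩ := hzB a3 ha3P (Ne.symm dza3) d7
    have hm3m1 : m3 ≠ m1 := by
      intro hh
      rcases complm1 a3 ha3P (hh ▸ ha3m3) with h' | h' | h'
      exacts [dza3 h'.symm, na13 h'.symm, na23 h'.symm]
    have hm3m2 : m3 ≠ m2 := by
      intro hh
      rcases complm2' a3 ha3P (hh ▸ ha3m3) with h' | h' | h'
      exacts [dza3 h'.symm, nb1a3 h'.symm, nb2a3 h'.symm]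
    obtain ⟨t', ht', ht'z, ht'a3⟩ := exists_third (le_of_eq (hL3 m3 hm3L).symm)
      (Finset.mem_filter.mpr ⟨hzP, hzm3⟩) (Finset.mem_filter.mpr ⟨ha3P, ha3m3⟩)
    rw [Finset.mem_filter] at ht'
    have ht'P : t' ∈ P := ht'.1
    have ht'm3 : t' ≤ m3 := ht'.2
    have hnp0m3 : ¬ p0 ≤ m3 := by
      intro hh
      rcases hp0lines m3 hm3L hh with h' | h' | h' <;> rw [h'] at hzm3
      exacts [hznl1 hzm3, hznl2 hzm3, hznl3 hzm3]
    rcases hPX t' ht'P with h' | h' | h' | h' | h' | h' | h' | h' <;> rw [h'] at ht'm3 ht'z ht'a3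
    · exact hnp0m3 ht'm3
    · exact ht'z rfl
    · exact hm3m1 (line_unique hPz hPa1 (hL m3 hm3L) (hL m1 hm1L) dza1 hzm3 ht'm3 hzm1 ha1m1)
    · exact hm3m2 (line_unique hPz hPb1 (hL m3 hm3L) (hL m2 hm2L) dzb1 hzm3 ht'm3 hzm2 hb1m2)
    · exact hm3m1 (line_unique hPz hPa2 (hL m3 hm3L) (hL m1 hm1L) dza2 hzm3 ht'm3 hzm1 ha2m1)
    · exact hm3m2 (line_unique hPz hPb2 (hL m3 hm3L) (hL m2 hm2L) dzb2 hzm3 ht'm3 hzm2 htm2)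
    · exact ht'a3 rfl
    · exact hznl3 ((line_unique hPa3 hPb3 (hL m3 hm3L) (hL l3 hl3L) d9 ha3m3 ht'm3
        ha3l3 hb3l3) ▸ hzm3)
  · exact chase8core P L hP hL hP3 hL3 hp0P hzP ha1P hb1P ha2P hb2P ha3P hb3P
      d1 d2 d3 d4 d5 d6 d7 d8 d9 dz dza1 dzb1 dza2 dzb2 dza3 dzb3
      hl1L hl2L hl3L hm1L hm2L h12 h13 h23
      hp0l1 ha1l1 hb1l1 hp0l2 ha2l2 hb2l2 hp0l3 ha3l3 hb3l3
      hzm1 ha1m1 ha2m1 hzm2 hb1m2 htm2 hp0lines hPX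
  · exact chase8core P L hP hL hP3 hL3 hp0P hzP ha1P hb1P ha2P hb2P hb3P ha3P
      d1 d2 d3 d4 d5 d6 d8 d7 (Ne.symm d9) dz dza1 dzb1 dza2 dzb2 dzb3 dza3
      hl1L hl2L hl3L hm1L hm2L h12 h13 h23
      hp0l1 ha1l1 hb1l1 hp0l2 ha2l2 hb2l2 hp0l3 hb3l3 ha3l3
      hzm1 ha1m1 ha2m1 hzm2 hb1m2 htm2 hp0lines
      (fun t' ht' => by rcases hPX t' ht' with h' | h' | h' | h' | h' | h' | h' | h' <;> tauto)

set_option maxHeartbeats 1600000 in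
lemma main7 (P L : Finset (Submodule ℝ (Fin 3 → ℝ)))
    (hP : ∀ p ∈ P, IsProjPoint p) (hL : ∀ l ∈ L, IsProjLine l)
    (hP3 : ∀ p ∈ P, pointDeg L p = 3) (hL3 : ∀ l ∈ L, lineDeg P l = 3)
    (hPc : P.card = 7) : False := by
  obtain ⟨p0, hp0P⟩ := Finset.card_pos.mp (by omega : 0 < P.card)
  obtain ⟨l1, l2, l3, a1, b1, a2, b2, a3, b3, hl1L, hl2L, hl3L, h12, h13, h23,
    hp0l1, hp0l2, hp0l3, hp0lines, ha1P, hb1P, ha2P, hb2P, ha3P, hb3P,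
    d1, d2, d3, d4, d5, d6, d7, d8, d9,
    ha1l1, hb1l1, ha2l2, hb2l2, ha3l3, hb3l3, compl1, compl2, compl3⟩ :=
    point_structure P L hP3 hL3 hp0P
  -- every other point is joined to p0
  obtain ⟨B, hBsub, hBcard, hBiff⟩ := neighbors P L hP hL hp0P
  have hB6 : B.card = 6 := by
    rw [hBcard]
    rw [Finset.sum_congr rfl (fun l hl => by
      rw [hL3 l (Finset.mem_filter.mp hl).1] : ∀ l ∈ L.filter (fun l => p0 ≤ l),
      lineDeg P l - 1 = 2)]
    rw [Finset.sum_const, smul_eq_mul]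
    have h3 : (L.filter (fun l => p0 ≤ l)).card = 3 := hP3 p0 hp0P
    rw [h3]
  have hBeq : B = P.erase p0 := by
    apply Finset.eq_of_subset_of_card_le hBsub
    rw [Finset.card_erase_of_mem hp0P, hPc, hB6]
  have hPX : ∀ t ∈ P, t = p0 ∨ t = a1 ∨ t = b1 ∨ t = a2 ∨ t = b2 ∨ t = a3 ∨ t = b3 := by
    intro t ht
    by_cases htp : t = p0
    · exact Or.inl htp
    · have : t ∈ B := by
        rw [hBeq]
        exact Finset.mem_erase.mpr ⟨htp, ht⟩
      obtain ⟨_, _, l, hlL, hp0l, htl⟩ := (hBiff t).mp this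
      rcases hp0lines l hlL hp0l with h | h | h <;> rw [h] at htl
      · rcases compl1 t ht htl with h' | h' | h' <;> tauto
      · rcases compl2 t ht htl with h' | h' | h' <;> tauto
      · rcases compl3 t ht htl with h' | h' | h' <;> tauto
  -- a second line through a1
  obtain ⟨e, e', heF, he'F, hel1, he'l1, hee'⟩ := card3_extract (hP3 a1 ha1P)
    (Finset.mem_filter.mpr ⟨hl1L, ha1l1⟩)
  rw [Finset.mem_filter] at heF
  have heL : e ∈ L := heF.1
  have ha1e : a1 ≤ e := heF.2
  -- p0 not on e
  have cr : ∀ x lx ly : Submodule ℝ (Fin 3 → ℝ),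
      x ∈ P → lx ∈ L → ly ∈ L → lx ≠ ly → x ≠ p0 → x ≤ lx → x ≤ ly →
      p0 ≤ lx → p0 ≤ ly → False := by
    intro x lx ly hx hlx hly hll hxp h1 h2 h3 h4
    exact hll (line_unique (hP x hx) (hP p0 hp0P) (hL lx hlx) (hL ly hly) hxp h1 h3 h2 h4)
  have na12 : a1 ≠ a2 := fun h => cr a1 l1 l2 ha1P hl1L hl2L h12 d1 ha1l1 (h ▸ ha2l2) hp0l1 hp0l2
  have na1b2 : a1 ≠ b2 := fun h => cr a1 l1 l2 ha1P hl1L hl2L h12 d1 ha1l1 (h ▸ hb2l2) hp0l1 hp0l2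
  have na13 : a1 ≠ a3 := fun h => cr a1 l1 l3 ha1P hl1L hl3L h13 d1 ha1l1 (h ▸ ha3l3) hp0l1 hp0l3
  have na1b3 : a1 ≠ b3 := fun h => cr a1 l1 l3 ha1P hl1L hl3L h13 d1 ha1l1 (h ▸ hb3l3) hp0l1 hp0l3
  have hp0e : ¬ p0 ≤ e := by
    intro h
    rcases hp0lines e heL h with h' | h' | h'
    · exact hel1 h'
    · rw [h'] at ha1e
      rcases compl2 a1 ha1P ha1e with h'' | h'' | h''
      exacts [d1 h'', na12 h'', na1b2 h'']
    · rw [h'] at ha1e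
      rcases compl3 a1 ha1P ha1e with h'' | h'' | h''
      exacts [d1 h'', na13 h'', na1b3 h'']
  -- the other two points of e
  obtain ⟨t, t', htF, ht'F, hta1, ht'a1, htt'⟩ := card3_extract (hL3 e heL)
    (Finset.mem_filter.mpr ⟨ha1P, ha1e⟩)
  rw [Finset.mem_filter] at htF ht'F
  have hcl : ∀ s : Submodule ℝ (Fin 3 → ℝ), s ∈ P → s ≤ e → s ≠ a1 →
      s = a2 ∨ s = b2 ∨ s = a3 ∨ s = b3 := by
    intro s hsP hse hsa1
    rcases hPX s hsP with h | h | h | h | h | h | h <;> rw [h] at hse hsa1 ⊢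
    · exact absurd hse hp0e
    · exact absurd rfl hsa1
    · exact absurd (line_unique (hP a1 ha1P) (hP b1 hb1P) (hL e heL) (hL l1 hl1L) d3
        ha1e hse ha1l1 hb1l1) hel1
    · tauto
    · tauto
    · tauto
    · tauto
  have run : ∀ (x2 y2 x3 y3 lA lB : Submodule ℝ (Fin 3 → ℝ)),
      x2 ∈ P → y2 ∈ P → x3 ∈ P → y3 ∈ P →
      x2 ≠ p0 → y2 ≠ p0 → x2 ≠ y2 → x3 ≠ p0 → y3 ≠ p0 → x3 ≠ y3 →
      lA ∈ L → lB ∈ L → l1 ≠ lA → l1 ≠ lB → lA ≠ lB →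
      p0 ≤ lA → x2 ≤ lA → y2 ≤ lA → p0 ≤ lB → x3 ≤ lB → y3 ≤ lB →
      x2 ≤ e → x3 ≤ e →
      (∀ l ∈ L, p0 ≤ l → l = l1 ∨ l = lA ∨ l = lB) →
      (∀ s ∈ P, s = p0 ∨ s = a1 ∨ s = b1 ∨ s = x2 ∨ s = y2 ∨ s = x3 ∨ s = y3) → False := by
    intro x2 y2 x3 y3 lA lB hx2P hy2P hx3P hy3P hx2p hy2p hxy2 hx3p hy3p hxy3
      hlAL hlBL h1A h1B hAB hp0A hx2A hy2A hp0B hx3B hy3B hx2e hx3e hlines hPX'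
    exact chase7 P L hP hL hP3 hL3 hp0P ha1P hb1P hx2P hy2P hx3P hy3P
      d1 d2 d3 hx2p hy2p hxy2 hx3p hy3p hxy3
      hl1L hlAL hlBL heL h1A h1B hAB
      hp0l1 ha1l1 hb1l1 hp0A hx2A hy2A hp0B hx3B hy3B ha1e hx2e hx3e hlines hPX'
  have nsame2 : ∀ s s' : Submodule ℝ (Fin 3 → ℝ), s ≤ e → s' ≤ e → s = a2 → s' = b2 → False := by
    intro s s' hse hs'e h h'
    rw [h] at hse; rw [h'] at hs'e
    have := line_unique (hP a2 ha2P) (hP b2 hb2P) (hL e heL) (hL l2 hl2L) d6 hse hs'e ha2l2 hb2l2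
    rw [this] at ha1e
    rcases compl2 a1 ha1P ha1e with h'' | h'' | h''
    exacts [d1 h'', na12 h'', na1b2 h'']
  have nsame3 : ∀ s s' : Submodule ℝ (Fin 3 → ℝ), s ≤ e → s' ≤ e → s = a3 → s' = b3 → False := by
    intro s s' hse hs'e h h'
    rw [h] at hse; rw [h'] at hs'e
    have := line_unique (hP a3 ha3P) (hP b3 hb3P) (hL e heL) (hL l3 hl3L) d9 hse hs'e ha3l3 hb3l3
    rw [this] at ha1e
    rcases compl3 a1 ha1P ha1e with h'' | h'' | h''
    exacts [d1 h'', na13 h'', na1b3 h'']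
  have htne : t ≠ a1 := fun h => hta1 (by rw [h])
  have ht'ne : t' ≠ a1 := fun h => ht'a1 (by rw [h])
  rcases hcl t htF.1 htF.2 htne with h | h | h | h <;>
    rcases hcl t' ht'F.1 ht'F.2 ht'ne with h' | h' | h'| h'
  · exact htt' (h ▸ h' ▸ rfl)
  · exact nsame2 t t' htF.2 ht'F.2 h h'
  · exact run a2 b2 a3 b3 l2 l3 ha2P hb2P ha3P hb3P d4 d5 d6 d7 d8 d9 hl2L hl3L h12 h13 h23 hp0l2 ha2l2 hb2l2 hp0l3 ha3l3 hb3l3 (h ▸ htF.2) (h' ▸ ht'F.2) hp0lines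
      (fun s hs => by
        rcases hPX s hs with h | h | h | h | h | h | h
        exacts [Or.inl h, Or.inr (Or.inl h), Or.inr (Or.inr (Or.inl h)), Or.inr (Or.inr (Or.inr (Or.inl h))), Or.inr (Or.inr (Or.inr (Or.inr (Or.inl h)))), Or.inr (Or.inr (Or.inr (Or.inr (Or.inr (Or.inl h))))), Or.inr (Or.inr (Or.inr (Or.inr (Or.inr (Or.inr (h))))))])
  · exact run a2 b2 b3 a3 l2 l3 ha2P hb2P hb3P ha3P d4 d5 d6 d8 d7 (Ne.symm d9) hl2L hl3L h12 h13 h23 hp0l2 ha2l2 hb2l2 hp0l3 hb3l3 ha3l3 (h ▸ htF.2) (h' ▸ ht'F.2) hp0lines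
      (fun s hs => by
        rcases hPX s hs with h | h | h | h | h | h | h
        exacts [Or.inl h, Or.inr (Or.inl h), Or.inr (Or.inr (Or.inl h)), Or.inr (Or.inr (Or.inr (Or.inl h))), Or.inr (Or.inr (Or.inr (Or.inr (Or.inl h)))), Or.inr (Or.inr (Or.inr (Or.inr (Or.inr (Or.inr (h)))))), Or.inr (Or.inr (Or.inr (Or.inr (Or.inr (Or.inl h)))))])
  · exact nsame2 t' t ht'F.2 htF.2 h' h
  · exact htt' (h ▸ h' ▸ rfl)
  · exact run b2 a2 a3 b3 l2 l3 hb2P ha2P ha3P hb3P d5 d4 (Ne.symm d6) d7 d8 d9 hl2L hl3L h12 h13 h23 hp0l2 hb2l2 ha2l2 hp0l3 ha3l3 hb3l3 (h ▸ htF.2) (h' ▸ ht'F.2) hp0lines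
      (fun s hs => by
        rcases hPX s hs with h | h | h | h | h | h | h
        exacts [Or.inl h, Or.inr (Or.inl h), Or.inr (Or.inr (Or.inl h)), Or.inr (Or.inr (Or.inr (Or.inr (Or.inl h)))), Or.inr (Or.inr (Or.inr (Or.inl h))), Or.inr (Or.inr (Or.inr (Or.inr (Or.inr (Or.inl h))))), Or.inr (Or.inr (Or.inr (Or.inr (Or.inr (Or.inr (h))))))])
  · exact run b2 a2 b3 a3 l2 l3 hb2P ha2P hb3P ha3P d5 d4 (Ne.symm d6) d8 d7 (Ne.symm d9) hl2L hl3L h12 h13 h23 hp0l2 hb2l2 ha2l2 hp0l3 hb3l3 ha3l3 (h ▸ htF.2) (h' ▸ ht'F.2) hp0lines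
      (fun s hs => by
        rcases hPX s hs with h | h | h | h | h | h | h
        exacts [Or.inl h, Or.inr (Or.inl h), Or.inr (Or.inr (Or.inl h)), Or.inr (Or.inr (Or.inr (Or.inr (Or.inl h)))), Or.inr (Or.inr (Or.inr (Or.inl h))), Or.inr (Or.inr (Or.inr (Or.inr (Or.inr (Or.inr (h)))))), Or.inr (Or.inr (Or.inr (Or.inr (Or.inr (Or.inl h)))))])
  · exact run a3 b3 a2 b2 l3 l2 ha3P hb3P ha2P hb2P d7 d8 d9 d4 d5 d6 hl3L hl2L h13 h12 (Ne.symm h23) hp0l3 ha3l3 hb3l3 hp0l2 ha2l2 hb2l2 (h ▸ htF.2) (h' ▸ ht'F.2) (fun l hl hp => (hp0lines l hl hp).imp id Or.symm)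
      (fun s hs => by
        rcases hPX s hs with h | h | h | h | h | h | h
        exacts [Or.inl h, Or.inr (Or.inl h), Or.inr (Or.inr (Or.inl h)), Or.inr (Or.inr (Or.inr (Or.inr (Or.inr (Or.inl h))))), Or.inr (Or.inr (Or.inr (Or.inr (Or.inr (Or.inr (h)))))), Or.inr (Or.inr (Or.inr (Or.inl h))), Or.inr (Or.inr (Or.inr (Or.inr (Or.inl h))))])
  · exact run a3 b3 b2 a2 l3 l2 ha3P hb3P hb2P ha2P d7 d8 d9 d5 d4 (Ne.symm d6) hl3L hl2L h13 h12 (Ne.symm h23) hp0l3 ha3l3 hb3l3 hp0l2 hb2l2 ha2l2 (h ▸ htF.2) (h' ▸ ht'F.2) (fun l hl hp => (hp0lines l hl hp).imp id Or.symm)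
      (fun s hs => by
        rcases hPX s hs with h | h | h | h | h | h | h
        exacts [Or.inl h, Or.inr (Or.inl h), Or.inr (Or.inr (Or.inl h)), Or.inr (Or.inr (Or.inr (Or.inr (Or.inr (Or.inr (h)))))), Or.inr (Or.inr (Or.inr (Or.inr (Or.inr (Or.inl h))))), Or.inr (Or.inr (Or.inr (Or.inl h))), Or.inr (Or.inr (Or.inr (Or.inr (Or.inl h))))])
  · exact htt' (h ▸ h' ▸ rfl)
  · exact nsame3 t t' htF.2 ht'F.2 h h'
  · exact run b3 a3 a2 b2 l3 l2 hb3P ha3P ha2P hb2P d8 d7 (Ne.symm d9) d4 d5 d6 hl3L hl2L h13 h12 (Ne.symm h23) hp0l3 hb3l3 ha3l3 hp0l2 ha2l2 hb2l2 (h ▸ htF.2) (h' ▸ ht'F.2) (fun l hl hp => (hp0lines l hl hp).imp id Or.symm)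
      (fun s hs => by
        rcases hPX s hs with h | h | h | h | h | h | h
        exacts [Or.inl h, Or.inr (Or.inl h), Or.inr (Or.inr (Or.inl h)), Or.inr (Or.inr (Or.inr (Or.inr (Or.inr (Or.inl h))))), Or.inr (Or.inr (Or.inr (Or.inr (Or.inr (Or.inr (h)))))), Or.inr (Or.inr (Or.inr (Or.inr (Or.inl h)))), Or.inr (Or.inr (Or.inr (Or.inl h)))])
  · exact run b3 a3 b2 a2 l3 l2 hb3P ha3P hb2P ha2P d8 d7 (Ne.symm d9) d5 d4 (Ne.symm d6) hl3L hl2L h13 h12 (Ne.symm h23) hp0l3 hb3l3 ha3l3 hp0l2 hb2l2 ha2l2 (h ▸ htF.2) (h' ▸ ht'F.2) (fun l hl hp => (hp0lines l hl hp).imp id Or.symm)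
      (fun s hs => by
        rcases hPX s hs with h | h | h | h | h | h | h
        exacts [Or.inl h, Or.inr (Or.inl h), Or.inr (Or.inr (Or.inl h)), Or.inr (Or.inr (Or.inr (Or.inr (Or.inr (Or.inr (h)))))), Or.inr (Or.inr (Or.inr (Or.inr (Or.inr (Or.inl h))))), Or.inr (Or.inr (Or.inr (Or.inr (Or.inl h)))), Or.inr (Or.inr (Or.inr (Or.inl h)))])
  · exact nsame3 t' t ht'F.2 htF.2 h' h
  · exact htt' (h ▸ h' ▸ rfl)

set_option maxHeartbeats 1600000 in
lemma main8 (P L : Finset (Submodule ℝ (Fin 3 → ℝ)))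
    (hP : ∀ p ∈ P, IsProjPoint p) (hL : ∀ l ∈ L, IsProjLine l)
    (hP3 : ∀ p ∈ P, pointDeg L p = 3) (hL3 : ∀ l ∈ L, lineDeg P l = 3)
    (hPc : P.card = 8) : False := by
  obtain ⟨p0, hp0P⟩ := Finset.card_pos.mp (by omega : 0 < P.card)
  obtain ⟨l1, l2, l3, a1, b1, a2, b2, a3, b3, hl1L, hl2L, hl3L, h12, h13, h23,
    hp0l1, hp0l2, hp0l3, hp0lines, ha1P, hb1P, ha2P, hb2P, ha3P, hb3P,
    d1, d2, d3, d4, d5, d6, d7, d8, d9,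
    ha1l1, hb1l1, ha2l2, hb2l2, ha3l3, hb3l3, compl1, compl2, compl3⟩ :=
    point_structure P L hP3 hL3 hp0P
  obtain ⟨B, hBsub, hBcard, hBiff⟩ := neighbors P L hP hL hp0P
  have hB6 : B.card = 6 := by
    rw [hBcard]
    rw [Finset.sum_congr rfl (fun l hl => by
      rw [hL3 l (Finset.mem_filter.mp hl).1] : ∀ l ∈ L.filter (fun l => p0 ≤ l),
      lineDeg P l - 1 = 2)]
    rw [Finset.sum_const, smul_eq_mul]
    have h3 : (L.filter (fun l => p0 ≤ l)).card = 3 := hP3 p0 hp0P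
    rw [h3]
  -- the point z not joined to p0
  have hScard : ((P.erase p0) \ B).card = 1 := by
    rw [Finset.card_sdiff_of_subset hBsub, Finset.card_erase_of_mem hp0P, hPc, hB6]
  obtain ⟨z, hzS⟩ := Finset.card_pos.mp (by omega : 0 < ((P.erase p0) \ B).card)
  have hSsing : (P.erase p0) \ B = {z} := by
    apply (Finset.eq_of_subset_of_card_le (Finset.singleton_subset_iff.mpr hzS) (by
      rw [hScard, Finset.card_singleton])).symm
  rw [Finset.mem_sdiff, Finset.mem_erase] at hzS
  have hzP : z ∈ P := hzS.1.2
  have dz : z ≠ p0 := hzS.1.1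
  have hzNB : z ∉ B := hzS.2
  have hznoline : ∀ l ∈ L, p0 ≤ l → ¬ z ≤ l := by
    intro l hl hp0l hzl
    exact hzNB ((hBiff z).mpr ⟨hzP, dz, l, hl, hp0l, hzl⟩)
  have hzl1 : ¬ z ≤ l1 := hznoline l1 hl1L hp0l1
  have hzl2 : ¬ z ≤ l2 := hznoline l2 hl2L hp0l2
  have hzl3 : ¬ z ≤ l3 := hznoline l3 hl3L hp0l3
  have dza1 : z ≠ a1 := fun h => hzl1 (h ▸ ha1l1)
  have dzb1 : z ≠ b1 := fun h => hzl1 (h ▸ hb1l1)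
  have dza2 : z ≠ a2 := fun h => hzl2 (h ▸ ha2l2)
  have dzb2 : z ≠ b2 := fun h => hzl2 (h ▸ hb2l2)
  have dza3 : z ≠ a3 := fun h => hzl3 (h ▸ ha3l3)
  have dzb3 : z ≠ b3 := fun h => hzl3 (h ▸ hb3l3)
  have hPX : ∀ t ∈ P, t = p0 ∨ t = z ∨ t = a1 ∨ t = b1 ∨ t = a2 ∨ t = b2 ∨ t = a3 ∨ t = b3 := by
    intro t ht
    by_cases htp : t = p0
    · exact Or.inl htp
    by_cases htz : t = z
    · exact Or.inr (Or.inl htz)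
    have htB : t ∈ B := by
      by_contra htB
      have : t ∈ (P.erase p0) \ B := Finset.mem_sdiff.mpr ⟨Finset.mem_erase.mpr ⟨htp, ht⟩, htB⟩
      rw [hSsing, Finset.mem_singleton] at this
      exact htz this
    obtain ⟨_, _, l, hlL, hp0l, htl⟩ := (hBiff t).mp htB
    rcases hp0lines l hlL hp0l with h | h | h <;> rw [h] at htl
    · rcases compl1 t ht htl with h' | h' | h' <;> tauto
    · rcases compl2 t ht htl with h' | h' | h' <;> tauto
    · rcases compl3 t ht htl with h' | h' | h' <;> tauto
  -- z is joined to everything else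
  obtain ⟨Bz, hBzsub, hBzcard, hBziff⟩ := neighbors P L hP hL hzP
  have hBz6 : Bz.card = 6 := by
    rw [hBzcard]
    rw [Finset.sum_congr rfl (fun l hl => by
      rw [hL3 l (Finset.mem_filter.mp hl).1] : ∀ l ∈ L.filter (fun l => z ≤ l),
      lineDeg P l - 1 = 2)]
    rw [Finset.sum_const, smul_eq_mul]
    have h3 : (L.filter (fun l => z ≤ l)).card = 3 := hP3 z hzP
    rw [h3]
  have hp0NBz : p0 ∉ Bz := by
    intro h
    obtain ⟨_, _, l, hlL, hzl, hp0l⟩ := (hBziff p0).mp h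
    exact hznoline l hlL hp0l hzl
  have hBzsub2 : Bz ⊆ (P.erase z).erase p0 := by
    intro q hq
    have h1 := hBzsub hq
    rw [Finset.mem_erase]
    exact ⟨fun h => hp0NBz (h ▸ hq), h1⟩
  have hBzeq : Bz = (P.erase z).erase p0 := by
    apply Finset.eq_of_subset_of_card_le hBzsub2
    rw [Finset.card_erase_of_mem (Finset.mem_erase.mpr ⟨Ne.symm dz, hp0P⟩),
      Finset.card_erase_of_mem hzP, hPc, hBz6]
  have hzB : ∀ q ∈ P, q ≠ z → q ≠ p0 → ∃ l ∈ L, z ≤ l ∧ q ≤ l := by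
    intro q hq hqz hqp
    have : q ∈ Bz := by
      rw [hBzeq, Finset.mem_erase, Finset.mem_erase]
      exact ⟨hqp, hqz, hq⟩
    obtain ⟨_, _, l, hlL, hzl, hql⟩ := (hBziff q).mp this
    exact ⟨l, hlL, hzl, hql⟩
  -- the line m1 through z and a1
  obtain ⟨m1, hm1L, hzm1, ha1m1⟩ := hzB a1 ha1P (Ne.symm dza1) d1
  -- its third point
  obtain ⟨t, ht, htz, hta1⟩ := exists_third (le_of_eq (hL3 m1 hm1L).symm)
    (Finset.mem_filter.mpr ⟨hzP, hzm1⟩) (Finset.mem_filter.mpr ⟨ha1P, ha1m1⟩)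
  rw [Finset.mem_filter] at ht
  have htP : t ∈ P := ht.1
  have htm1 : t ≤ m1 := ht.2
  have run : ∀ (x2 y2 x3 y3 lA lB : Submodule ℝ (Fin 3 → ℝ)),
      x2 ∈ P → y2 ∈ P → x3 ∈ P → y3 ∈ P →
      x2 ≠ p0 → y2 ≠ p0 → x2 ≠ y2 → x3 ≠ p0 → y3 ≠ p0 → x3 ≠ y3 →
      z ≠ x2 → z ≠ y2 → z ≠ x3 → z ≠ y3 →
      lA ∈ L → lB ∈ L → l1 ≠ lA → l1 ≠ lB → lA ≠ lB →
      p0 ≤ lA → x2 ≤ lA → y2 ≤ lA → p0 ≤ lB → x3 ≤ lB → y3 ≤ lB →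
      x2 ≤ m1 →
      (∀ l ∈ L, p0 ≤ l → l = l1 ∨ l = lA ∨ l = lB) →
      (∀ s ∈ P, s = p0 ∨ s = z ∨ s = a1 ∨ s = b1 ∨ s = x2 ∨ s = y2 ∨ s = x3 ∨ s = y3) →
      False := by
    intro x2 y2 x3 y3 lA lB hx2P hy2P hx3P hy3P hx2p hy2p hxy2 hx3p hy3p hxy3
      hzx2 hzy2 hzx3 hzy3 hlAL hlBL h1A h1B hAB hp0A hx2A hy2A hp0B hx3B hy3B hx2m1
      hlines hPX'
    exact chase8 P L hP hL hP3 hL3 hp0P hzP ha1P hb1P hx2P hy2P hx3P hy3P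
      d1 d2 d3 hx2p hy2p hxy2 hx3p hy3p hxy3 dz dza1 dzb1 hzx2 hzy2 hzx3 hzy3
      hl1L hlAL hlBL hm1L h1A h1B hAB
      hp0l1 ha1l1 hb1l1 hp0A hx2A hy2A hp0B hx3B hy3B
      hzm1 ha1m1 hx2m1 hlines hPX' hzB
  rcases hPX t htP with h | h | h | h | h | h | h | h <;> rw [h] at htm1 htz hta1
  · exact hznoline m1 hm1L htm1 hzm1
  · exact htz rfl
  · exact hta1 rfl
  · exact hzl1 ((line_unique (hP a1 ha1P) (hP b1 hb1P) (hL m1 hm1L) (hL l1 hl1L) d3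
      ha1m1 htm1 ha1l1 hb1l1) ▸ hzm1)
  · exact run a2 b2 a3 b3 l2 l3 ha2P hb2P ha3P hb3P d4 d5 d6 d7 d8 d9
      dza2 dzb2 dza3 dzb3 hl2L hl3L h12 h13 h23
      hp0l2 ha2l2 hb2l2 hp0l3 ha3l3 hb3l3 htm1 hp0lines hPX
  · exact run b2 a2 a3 b3 l2 l3 hb2P ha2P ha3P hb3P d5 d4 (Ne.symm d6) d7 d8 d9
      dzb2 dza2 dza3 dzb3 hl2L hl3L h12 h13 h23
      hp0l2 hb2l2 ha2l2 hp0l3 ha3l3 hb3l3 htm1 hp0lines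
      (fun s hs => by
        rcases hPX s hs with h' | h' | h' | h' | h' | h' | h' | h'
        exacts [Or.inl h', Or.inr (Or.inl h'), Or.inr (Or.inr (Or.inl h')),
          Or.inr (Or.inr (Or.inr (Or.inl h'))),
          Or.inr (Or.inr (Or.inr (Or.inr (Or.inr (Or.inl h'))))),
          Or.inr (Or.inr (Or.inr (Or.inr (Or.inl h')))),
          Or.inr (Or.inr (Or.inr (Or.inr (Or.inr (Or.inr (Or.inl h')))))),
          Or.inr (Or.inr (Or.inr (Or.inr (Or.inr (Or.inr (Or.inr h'))))))])
  · exact run a3 b3 a2 b2 l3 l2 ha3P hb3P ha2P hb2P d7 d8 d9 d4 d5 d6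
      dza3 dzb3 dza2 dzb2 hl3L hl2L h13 h12 (Ne.symm h23)
      hp0l3 ha3l3 hb3l3 hp0l2 ha2l2 hb2l2 htm1
      (fun l hl hp => (hp0lines l hl hp).imp id Or.symm)
      (fun s hs => by
        rcases hPX s hs with h' | h' | h' | h' | h' | h' | h' | h'
        exacts [Or.inl h', Or.inr (Or.inl h'), Or.inr (Or.inr (Or.inl h')),
          Or.inr (Or.inr (Or.inr (Or.inl h'))),
          Or.inr (Or.inr (Or.inr (Or.inr (Or.inr (Or.inr (Or.inl h')))))),
          Or.inr (Or.inr (Or.inr (Or.inr (Or.inr (Or.inr (Or.inr h')))))),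
          Or.inr (Or.inr (Or.inr (Or.inr (Or.inl h')))),
          Or.inr (Or.inr (Or.inr (Or.inr (Or.inr (Or.inl h')))))])
  · exact run b3 a3 a2 b2 l3 l2 hb3P ha3P ha2P hb2P d8 d7 (Ne.symm d9) d4 d5 d6
      dzb3 dza3 dza2 dzb2 hl3L hl2L h13 h12 (Ne.symm h23)
      hp0l3 hb3l3 ha3l3 hp0l2 ha2l2 hb2l2 htm1
      (fun l hl hp => (hp0lines l hl hp).imp id Or.symm)
      (fun s hs => by
        rcases hPX s hs with h' | h' | h' | h' | h' | h' | h' | h'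
        exacts [Or.inl h', Or.inr (Or.inl h'), Or.inr (Or.inr (Or.inl h')),
          Or.inr (Or.inr (Or.inr (Or.inl h'))),
          Or.inr (Or.inr (Or.inr (Or.inr (Or.inr (Or.inr (Or.inl h')))))),
          Or.inr (Or.inr (Or.inr (Or.inr (Or.inr (Or.inr (Or.inr h')))))),
          Or.inr (Or.inr (Or.inr (Or.inr (Or.inr (Or.inl h'))))),
          Or.inr (Or.inr (Or.inr (Or.inr (Or.inl h'))))])

end Helpers

theorem stmt3 (n : ℕ) (hn1 : 1 ≤ n) (hn8 : n ≤ 8) :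
    ¬ ∃ P L : Finset (Submodule ℝ (Fin 3 → ℝ)),
      (∀ p ∈ P, IsProjPoint p) ∧ (∀ l ∈ L, IsProjLine l) ∧
      P.card = n ∧ L.card = n ∧
      (∀ p ∈ P, pointDeg L p = 3 ∨ pointDeg L p = 4) ∧
      (∀ l ∈ L, lineDeg P l = 3 ∨ lineDeg P l = 4) := by
  rintro ⟨P, L, hP, hL, hPc, hLc, hdegP, hdegL⟩
  have hcard : P.card = L.card := by rw [hPc, hLc]
  have hne : P.Nonempty := Finset.card_pos.mp (by omega)
  obtain ⟨hP3, hL3, h7⟩ := degrees P L hP hL hcard (by omega) hne hdegP hdegL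
  have hcases : P.card = 7 ∨ P.card = 8 := by omega
  rcases hcases with h | h
  · exact main7 P L hP hL hP3 hL3 h
  · exact main8 P L hP hL hP3 hL3 h
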